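/- arXiv:2508.19775 — 10 statements merged into one kernel-verified Lean document; each statement's English description precedes it below -/
import Mathlib

section
/- If the edge sets of q bipartite graphs on vertex set {1,...,n} together cover all edges of the complete graph K_n, then q ≥ log₂ n. -/
open SimpleGraph

/-- If `q` bipartite graphs on `{1,…,n}` together cover all edges of the complete
graph, then `q ≥ log₂ n`. -/
theorem bipartite_cover_log (n q : ℕ) (G : Fin q → SimpleGraph (Fin n))
    (hbip : ∀ j, (G j).Colorable 2)
    (hcov : ∀ i j : Fin n, i ≠ j → ∃ m, (G m).Adj i j) :
    Real.logb 2 n ≤ (q : ℝ) := by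
  have hc : ∀ j, (G j).Coloring (Fin 2) := fun j => (hbip j).some
  have hinj : Function.Injective (fun i (m : Fin q) => (hc m) i) := by
    intro i j h
    by_contra hne
    obtain ⟨m, hm⟩ := hcov i j hne
    exact (hc m).valid hm (congrFun h m)
  have hcard : n ≤ 2 ^ q := by
    have := Fintype.card_le_of_injective _ hinj
    simpa using this
  have h2 : (n : ℝ) ≤ (2 : ℝ) ^ q := by
    exact_mod_cast le_trans hcard (le_of_eq rfl)
  have hq : Real.logb 2 ((2:ℝ) ^ q) = q := by
    rw [Real.logb_pow]
    simp
  calc Real.logb 2 n ≤ Real.logb 2 ((2:ℝ) ^ q) := by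
        rcases Nat.eq_zero_or_pos n with h | h
        · rw [hq]; simp [h]
        · exact Real.logb_le_logb_of_le (by norm_num) (by exact_mod_cast h) h2
    _ = q := hq
end

section
/- For natural numbers x < y < z, the position of the most significant differing bit of x and y differs from the position of the most significant differing bit of y and z: m(x,y) ≠ m(y,z). -/
/-- `msb a b` is the position (indexed from 1) of the most significant bit in
which the binary representations of `a` and `b` differ. -/
def msb (a b : ℕ) : ℕ := Nat.size (a ^^^ b)

private lemma testBit_size_sub_one {s : ℕ} (h : s ≠ 0) :
    s.testBit (s.size - 1) = true := by
  have h1 : 0 < s.size := Nat.size_pos.mpr (Nat.pos_of_ne_zero h)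
  have hle : 2 ^ (s.size - 1) ≤ s := Nat.lt_size.mp (by omega)
  have hlt : s < 2 ^ s.size := Nat.lt_size_self s
  have hdiv : s / 2 ^ (s.size - 1) = 1 := by
    have h2 : s < 2 ^ (s.size - 1) * 2 := by
      rw [← pow_succ]
      have he : s.size - 1 + 1 = s.size := by omega
      rw [he]; exact hlt
    exact Nat.div_eq_of_lt_le (by simpa using hle) (by linarith [h2])
  simp [Nat.testBit_eq_decide_div_mod_eq, hdiv]

private lemma top_bit {a b : ℕ} (hab : a < b) :
    b.testBit ((a ^^^ b).size - 1) = true ∧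
      a.testBit ((a ^^^ b).size - 1) = false := by
  set s := a ^^^ b with hs
  have hs0 : s ≠ 0 := by
    simp only [hs, ne_eq, xor_eq_zero_iff]
    omega
  have htop : s.testBit (s.size - 1) = true := testBit_size_sub_one hs0
  have hxor : (a.testBit (s.size - 1)) ≠ (b.testBit (s.size - 1)) := by
    have h := Nat.testBit_xor a b (s.size - 1)
    rw [← hs, htop] at h
    intro hc; rw [hc] at h; simp at h
  have hb : b.testBit (s.size - 1) = true := by
    by_contra hbf
    have hbf : b.testBit (s.size - 1) = false := by simpa using hbf
    have haf : a.testBit (s.size - 1) = true := by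
      rw [hbf] at hxor
      simpa using hxor
    have hlt : b < a := by
      apply Nat.lt_of_testBit (s.size - 1) hbf haf
      intro j hj
      have hsj : s.testBit j = false := by
        apply Nat.testBit_eq_false_of_lt
        calc s < 2 ^ s.size := Nat.lt_size_self s
        _ ≤ 2 ^ j := Nat.pow_le_pow_right (by norm_num) (by omega)
      have h := Nat.testBit_xor a b j
      rw [← hs, hsj] at h
      cases hA : a.testBit j <;> cases hB : b.testBit j <;>
        simp [hA, hB] at h ⊢
    omega
  refine ⟨hb, ?_⟩
  rw [hb] at hxor
  simpa using hxor

theorem msb_ne_of_lt_lt (x y z : ℕ) (hxy : x < y) (hyz : y < z) :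
    msb x y ≠ msb y z := by
  intro h
  unfold msb at h
  have h1 := (top_bit hxy).1
  have h2 := (top_bit hyz).2
  rw [h] at h1
  rw [h1] at h2
  simp at h2
end

section
/- The chromatic number of J_±(n,2,-1) is at most 2⌈log₂ n⌉ + 2. Explicitly: assign one color to all vertices with both nonzero coordinates equal to +1, one color to all with both equal to -1; color a vertex with value +1 on coordinate a and -1 on coordinate b by the pair (m(a,b), sign), where m(a,b) is the most significant differing bit of a and b and the sign records which of a,b has digit 1 in that bit. This is a proper coloring. -/
open SimpleGraph Finset

/-- Vertices of the Johnson-type graph: vectors in `{-1,0,1}^n` with exactly `k`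
nonzero coordinates. -/
def JVert (n k : ℕ) : Type :=
  {v : Fin n → ℤ // (∀ i, v i = -1 ∨ v i = 0 ∨ v i = 1) ∧
    (Finset.univ.filter (fun i => v i ≠ 0)).card = k}

/-- The Johnson-type graph `J_±(n,k,t)`: edges join pairs with scalar product `t`. -/
def Jpm (n k : ℕ) (t : ℤ) : SimpleGraph (JVert n k) where
  Adj u v := u ≠ v ∧ ∑ i, u.1 i * v.1 i = t
  symm := by
    constructor
    intro u v ⟨h1, h2⟩
    refine ⟨h1.symm, ?_⟩
    rw [← h2]
    exact Finset.sum_congr rfl (fun i _ => mul_comm _ _)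
  loopless := by constructor; intro u ⟨h1, _⟩; exact h1 rfl

/-- The highest bit of a nonzero number is set. -/
lemma testBit_log_self {x : ℕ} (hx : x ≠ 0) : x.testBit (Nat.log 2 x) = true := by
  have h1 : 2 ^ Nat.log 2 x ≤ x := Nat.pow_log_le_self 2 hx
  have h2 : x < 2 ^ (Nat.log 2 x + 1) := Nat.lt_pow_succ_log_self one_lt_two x
  rw [Nat.testBit_eq_decide_div_mod_eq]
  have hpos : 0 < 2 ^ Nat.log 2 x := Nat.pow_pos (by norm_num)
  have hlo : 1 ≤ x / 2 ^ Nat.log 2 x := (Nat.one_le_div_iff hpos).2 h1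
  have hhi : x / 2 ^ Nat.log 2 x < 2 := by
    apply Nat.div_lt_of_lt_mul
    rwa [pow_succ] at h2
  have hdiv : x / 2 ^ Nat.log 2 x = 1 := by omega
  rw [hdiv]; rfl

lemma jvert_support {n : ℕ} (w : JVert n 2) {i j : Fin n} (hi : w.1 i ≠ 0)
    (hj : w.1 j ≠ 0) (hij : i ≠ j) {k : Fin n} (hk : w.1 k ≠ 0) : k = i ∨ k = j := by
  have hsub : ({i, j} : Finset (Fin n)) ⊆ univ.filter (fun a => w.1 a ≠ 0) := by
    intro x hx
    simp only [mem_insert, mem_singleton] at hx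
    rcases hx with h | h <;> subst h <;> simp [hi, hj]
  have hcard : ({i, j} : Finset (Fin n)).card = 2 := by
    rw [Finset.card_insert_of_notMem (by simp [hij]), Finset.card_singleton]
  have heq := Finset.eq_of_subset_of_card_le hsub (by rw [w.2.2, hcard])
  have hk' : k ∈ ({i, j} : Finset (Fin n)) := by
    rw [heq]; simp [hk]
  simpa using hk'

/-- The coloring. -/
noncomputable def jcolor {n : ℕ} (w : JVert n 2) : ℕ :=
  if h : ∃ p : Fin n × Fin n, w.1 p.1 = 1 ∧ w.1 p.2 = -1 then
    2 * Nat.log 2 ((h.choose.1 : ℕ) ^^^ (h.choose.2 : ℕ)) +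
      (if Nat.testBit h.choose.1 (Nat.log 2 ((h.choose.1 : ℕ) ^^^ (h.choose.2 : ℕ))) then 1 else 0)
      + 2
  else if ∃ a, w.1 a = 1 then 0 else 1

lemma adj_exists {n : ℕ} {u v : JVert n 2} (h : (Jpm n 2 (-1)).Adj u v) :
    ∃ i, u.1 i * v.1 i = -1 := by
  by_contra hc
  push_neg at hc
  have : (0 : ℤ) ≤ ∑ i, u.1 i * v.1 i := by
    apply Finset.sum_nonneg
    intro i _
    have hci := hc i
    rcases u.2.1 i with h1 | h1 | h1 <;> rcases v.2.1 i with h2 | h2 | h2 <;>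
      rw [h1, h2] at hci ⊢ <;> (try norm_num at hci) <;> norm_num
  rw [h.2] at this
  norm_num at this

/-- In the mixed case, positive and negative coordinates are unique. -/
lemma mixed_unique {n : ℕ} (w : JVert n 2) {a b : Fin n} (ha : w.1 a = 1) (hb : w.1 b = -1) :
    (∀ k, w.1 k = 1 → k = a) ∧ (∀ k, w.1 k = -1 → k = b) := by
  have hab : a ≠ b := fun h => by rw [h, hb] at ha; norm_num at ha
  have ha' : w.1 a ≠ 0 := by rw [ha]; norm_num
  have hb' : w.1 b ≠ 0 := by rw [hb]; norm_num
  constructor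
  · intro k hk
    rcases jvert_support w ha' hb' hab (by rw [hk]; norm_num) with h | h
    · exact h
    · rw [h, hb] at hk; norm_num at hk
  · intro k hk
    rcases jvert_support w ha' hb' hab (by rw [hk]; norm_num) with h | h
    · rw [h, ha] at hk; norm_num at hk
    · exact h

lemma jcolor_mixed {n : ℕ} (w : JVert n 2) {a b : Fin n} (ha : w.1 a = 1) (hb : w.1 b = -1) :
    jcolor w = 2 * Nat.log 2 ((a : ℕ) ^^^ (b : ℕ)) +
      (if Nat.testBit a (Nat.log 2 ((a : ℕ) ^^^ (b : ℕ))) then 1 else 0) + 2 := by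
  have hex : ∃ p : Fin n × Fin n, w.1 p.1 = 1 ∧ w.1 p.2 = -1 := ⟨(a, b), ha, hb⟩
  rw [jcolor, dif_pos hex]
  obtain ⟨h1, h2⟩ := hex.choose_spec
  have hu := mixed_unique w ha hb
  rw [hu.1 _ h1, hu.2 _ h2]

lemma jcolor_lt {n : ℕ} (w : JVert n 2) : jcolor w < 2 * Nat.clog 2 n + 2 := by
  rw [jcolor]
  split
  · next h =>
    obtain ⟨h1, h2⟩ := h.choose_spec
    set a := h.choose.1
    set b := h.choose.2
    have hab : (a : ℕ) ≠ (b : ℕ) := by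
      intro he
      have : a = b := Fin.ext he
      rw [this, h2] at h1; norm_num at h1
    have hxne : (a : ℕ) ^^^ (b : ℕ) ≠ 0 := fun h => hab (xor_eq_zero_iff.mp h)
    have hn : n ≤ 2 ^ Nat.clog 2 n := Nat.le_pow_clog one_lt_two n
    have hxlt : (a : ℕ) ^^^ (b : ℕ) < 2 ^ Nat.clog 2 n := by
      apply Nat.lt_pow_two_of_testBit
      intro i hi
      rw [Nat.testBit_xor,
        Nat.testBit_lt_two_pow (lt_of_lt_of_le a.2 (hn.trans (Nat.pow_le_pow_right (by norm_num) hi))),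
        Nat.testBit_lt_two_pow (lt_of_lt_of_le b.2 (hn.trans (Nat.pow_le_pow_right (by norm_num) hi)))]
      rfl
    have hlog : Nat.log 2 ((a : ℕ) ^^^ (b : ℕ)) < Nat.clog 2 n :=
      Nat.log_lt_of_lt_pow hxne hxlt
    split <;> omega
  · split <;> omega

lemma testBit_ne {a b : ℕ} (hab : a ≠ b) :
    a.testBit (Nat.log 2 (a ^^^ b)) ≠ b.testBit (Nat.log 2 (a ^^^ b)) := by
  have hxne : a ^^^ b ≠ 0 := fun h => hab (xor_eq_zero_iff.mp h)
  have htb := testBit_log_self hxne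
  rw [Nat.testBit_xor] at htb
  intro h
  rw [h, Bool.xor_self] at htb
  exact Bool.false_ne_true htb

/-- `χ(J_±(n,2,-1)) ≤ 2⌈log₂ n⌉ + 2`. -/
theorem Jpm_two_colorable (n : ℕ) :
    (Jpm n 2 (-1)).Colorable (2 * Nat.clog 2 n + 2) := by
  refine ⟨SimpleGraph.Coloring.mk (fun w => ⟨jcolor w, jcolor_lt w⟩) ?_⟩
  intro u v hadj hcol
  have hcol' : jcolor u = jcolor v := congrArg Fin.val hcol
  obtain ⟨i, hi⟩ := adj_exists hadj
  have hsigns : (u.1 i = 1 ∧ v.1 i = -1) ∨ (u.1 i = -1 ∧ v.1 i = 1) := by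
    rcases u.2.1 i with h1 | h1 | h1 <;> rcases v.2.1 i with h2 | h2 | h2 <;>
      rw [h1, h2] at hi <;>
      first
        | exact Or.inl ⟨h1, h2⟩
        | exact Or.inr ⟨h1, h2⟩
        | norm_num at hi
  by_cases hu : ∃ p : Fin n × Fin n, u.1 p.1 = 1 ∧ u.1 p.2 = -1
  · by_cases hv : ∃ p : Fin n × Fin n, v.1 p.1 = 1 ∧ v.1 p.2 = -1
    · -- both mixed
      obtain ⟨⟨a, b⟩, ha, hb⟩ := hu
      obtain ⟨⟨c, d⟩, hc, hd⟩ := hv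
      rw [jcolor_mixed u ha hb, jcolor_mixed v hc hd] at hcol'
      have hab : (a : ℕ) ≠ (b : ℕ) := by
        intro he; rw [Fin.ext he, hb] at ha; norm_num at ha
      have hcd : (c : ℕ) ≠ (d : ℕ) := by
        intro he; rw [Fin.ext he, hd] at hc; norm_num at hc
      set m1 := Nat.log 2 ((a : ℕ) ^^^ (b : ℕ)) with hm1
      set m2 := Nat.log 2 ((c : ℕ) ^^^ (d : ℕ)) with hm2
      have key : m1 = m2 ∧ Nat.testBit a m1 = Nat.testBit c m2 := by
        cases h1 : Nat.testBit (a : ℕ) m1 <;> cases h2 : Nat.testBit (c : ℕ) m2 <;>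
            rw [h1, h2] at hcol' <;> norm_num at hcol'
        · exact ⟨by omega, rfl⟩
        · exfalso; omega
        · exfalso; omega
        · exact ⟨by omega, rfl⟩
      obtain ⟨hmm, hss⟩ := key
      have htab := testBit_ne hab
      have htcd := testBit_ne hcd
      rw [← hm1] at htab
      rw [← hm2] at htcd
      rw [hmm] at hss htab
      rcases hsigns with ⟨h1, h2⟩ | ⟨h1, h2⟩
      · have hia : i = a := (mixed_unique u ha hb).1 i h1
        have hid : i = d := (mixed_unique v hc hd).2 i h2
        have had : (a : ℕ) = (d : ℕ) := by rw [← hia, ← hid]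
        exact htcd (by rw [← had]; exact hss.symm)
      · have hib : i = b := (mixed_unique u ha hb).2 i h1
        have hic : i = c := (mixed_unique v hc hd).1 i h2
        have hbc : (b : ℕ) = (c : ℕ) := by rw [← hib, ← hic]
        exact htab (by rw [hbc]; exact hss)
    · rw [jcolor, dif_pos hu, jcolor, dif_neg hv] at hcol'
      split at hcol' <;> split at hcol' <;> omega
  · by_cases hv : ∃ p : Fin n × Fin n, v.1 p.1 = 1 ∧ v.1 p.2 = -1
    · rw [jcolor, dif_neg hu, jcolor, dif_pos hv] at hcol'
      split at hcol' <;> split at hcol' <;> omega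
    · rw [jcolor, dif_neg hu, jcolor, dif_neg hv] at hcol'
      rcases hsigns with ⟨h1, h2⟩ | ⟨h1, h2⟩
      · have hv1 : ¬ ∃ a, v.1 a = 1 := fun ⟨a, ha⟩ => hv ⟨(a, i), ha, h2⟩
        rw [if_pos ⟨i, h1⟩, if_neg hv1] at hcol'
        omega
      · have hu1 : ¬ ∃ a, u.1 a = 1 := fun ⟨a, ha⟩ => hu ⟨(a, i), ha, h1⟩
        rw [if_neg hu1, if_pos ⟨i, h2⟩] at hcol'
        omega
end

section
/- χ(J_±(n,2,-1)) ≥ log₂ n for all n ≥ 2. -/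
open SimpleGraph Finset

instance JVert.finite (n k : ℕ) : Finite (JVert n k) := by
  apply Finite.of_injective (fun v : JVert n k => fun i : Fin n =>
    (⟨(v.1 i + 1).toNat, by rcases v.2.1 i with h | h | h <;> simp [h]⟩ : Fin 3))
  intro v w h
  apply Subtype.ext
  funext i
  have h2 := congrFun h i
  simp only [Fin.mk.injEq] at h2
  rcases v.2.1 i with hv | hv | hv <;> rcases w.2.1 i with hw | hw | hw <;>
    simp [hv, hw] at h2 ⊢

def jv {n : ℕ} (a b : Fin n) (hab : a ≠ b) : JVert n 2 := by
  refine ⟨fun x => if x = a then 1 else if x = b then -1 else 0, fun i => ?_, ?_⟩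
  · by_cases h1 : i = a <;> by_cases h2 : i = b <;> simp [h1, h2, hab.symm]
  · have : (Finset.univ.filter (fun i : Fin n =>
        (if i = a then (1:ℤ) else if i = b then -1 else 0) ≠ 0)) = {a, b} := by
      ext x
      by_cases h1 : x = a <;> by_cases h2 : x = b <;> simp [h1, h2, hab.symm]
    rw [this, Finset.card_pair hab]

lemma jv_apply {n : ℕ} (a b : Fin n) (hab : a ≠ b) (x : Fin n) :
    (jv a b hab).1 x = if x = a then 1 else if x = b then -1 else 0 := rfl

lemma jv_adj {n : ℕ} (a b c : Fin n) (hab : a ≠ b) (hbc : b ≠ c) (hac : a ≠ c) :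
    (Jpm n 2 (-1)).Adj (jv a b hab) (jv b c hbc) := by
  constructor
  · intro h
    have := congrFun (congrArg Subtype.val h) a
    simp [jv_apply, hab, hac] at this
  · rw [Finset.sum_eq_single_of_mem b (Finset.mem_univ b)]
    · simp [jv_apply, hab.symm]
    · intro x _ hx
      by_cases h1 : x = a
      · subst h1; simp [jv_apply, hab, hac]
      · simp [jv_apply, h1, hx]

/-- Total version of `jv` (junk when `a = b`). -/
noncomputable def jv' {n : ℕ} (hn : 2 ≤ n) (a b : Fin n) : JVert n 2 :=
  if h : a ≠ b then jv a b h
  else jv ⟨0, by omega⟩ ⟨1, by omega⟩ (by simp [Fin.ext_iff])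

/-- `χ(J_±(n,2,-1)) ≥ log₂ n` for `n ≥ 2`. -/
theorem Jpm_two_lower (n : ℕ) (hn : 2 ≤ n) :
    Real.logb 2 n ≤ ((Jpm n 2 (-1)).chromaticNumber.toNat : ℝ) := by
  set G := Jpm n 2 (-1)
  set m := G.chromaticNumber.toNat with hm
  obtain ⟨C⟩ : G.Colorable m := G.colorable_chromaticNumber_of_fintype
  -- the color-set map
  set A : Fin n → Finset (Fin m) := fun i =>
    (Finset.univ.filter (fun a => a < i)).image (fun a => C (jv' hn a i)) with hA
  have key : ∀ i j : Fin n, i < j → C (jv' hn i j) ∈ A j ∧ C (jv' hn i j) ∉ A i := by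
    intro i j hij
    constructor
    · exact Finset.mem_image.2 ⟨i, Finset.mem_filter.2 ⟨Finset.mem_univ _, hij⟩, rfl⟩
    · intro hmem
      obtain ⟨a, ha, hcol⟩ := Finset.mem_image.1 hmem
      have hai : a < i := (Finset.mem_filter.1 ha).2
      have h1 : a ≠ i := ne_of_lt hai
      have h2 : i ≠ j := ne_of_lt hij
      have h3 : a ≠ j := ne_of_lt (hai.trans hij)
      have hadj : G.Adj (jv a i h1) (jv i j h2) := jv_adj a i j h1 h2 h3
      have : C (jv a i h1) ≠ C (jv i j h2) := C.valid hadj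
      apply this
      rw [show jv a i h1 = jv' hn a i by simp [jv', h1],
          show jv i j h2 = jv' hn i j by simp [jv', h2]]
      exact hcol
  have hinj : Function.Injective A := by
    intro i j h
    rcases lt_trichotomy i j with hij | hij | hij
    · exact absurd (h ▸ (key i j hij).1) (key i j hij).2
    · exact hij
    · exact absurd (h.symm ▸ (key j i hij).1) (key j i hij).2
  have hcard : n ≤ 2 ^ m := by
    have := Fintype.card_le_of_injective A hinj
    simpa [Fintype.card_finset] using this
  calc Real.logb 2 n ≤ Real.logb 2 ((2 : ℝ) ^ m) := by
        have h0 : (0:ℝ) < n := by positivity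
        exact (Real.logb_le_logb (by norm_num) h0 (by positivity)).mpr (by exact_mod_cast hcard)
    _ = m := by
        rw [Real.logb_pow]
        simp [Real.logb_self_eq_one]
end

section
/- If n ≤ C(2m+1, m) (binomial coefficient), then χ(J_±(n,2,-1)) ≤ 2m + 2. -/
open SimpleGraph Finset

/-- The set of "good" colors for a vector `w`, given an assignment `g` of sets to
coordinates: colors belonging to `g c` for every positive coordinate `c` and avoiding
`g c` for every negative coordinate `c`. -/
def pmSet {N n : ℕ} (g : Fin n → Finset (Fin N)) (w : Fin n → ℤ) : Finset (Fin N) :=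
  Finset.univ.filter (fun i => (∀ c, w c = 1 → i ∈ g c) ∧ ∀ c, w c = -1 → i ∉ g c)

/-- The color of a vector: the least good color if one exists, otherwise the extra color. -/
def pmColor {N n : ℕ} (g : Fin n → Finset (Fin N)) (w : Fin n → ℤ) : Fin (N + 1) :=
  if h : (pmSet g w).Nonempty then ((pmSet g w).min' h).castSucc else Fin.last N

lemma pmColor_ne {N n : ℕ} (g : Fin n → Finset (Fin N)) (u v : Fin n → ℤ) (c : Fin n)
    (huc : u c = 1) (hvc : v c = -1) (hv : (pmSet g v).Nonempty) :
    pmColor g u ≠ pmColor g v := by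
  have hminv := (pmSet g v).min'_mem hv
  simp only [pmSet, mem_filter] at hminv
  have hnot : (pmSet g v).min' hv ∉ g c := hminv.2.2 c hvc
  unfold pmColor
  rw [dif_pos hv]
  split_ifs with hu
  · have hminu := (pmSet g u).min'_mem hu
    simp only [pmSet, mem_filter] at hminu
    have hin : (pmSet g u).min' hu ∈ g c := hminu.2.1 c huc
    intro heq
    rw [Fin.castSucc_inj] at heq
    rw [heq] at hin
    exact hnot hin
  · intro heq
    exact (Fin.castSucc_lt_last _).ne' heq

/-- If `n ≤ C(2m+1, m)` then `χ(J_±(n,2,-1)) ≤ 2m + 2`. -/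
theorem Jpm_two_upper (n m : ℕ) (h : n ≤ (2 * m + 1).choose m) :
    (Jpm n 2 (-1)).Colorable (2 * m + 2) := by
  classical
  obtain ⟨f⟩ : Nonempty (Fin n ↪ {s : Finset (Fin (2 * m + 1)) // s.card = m}) := by
    apply Function.Embedding.nonempty_of_card_le
    rw [Fintype.card_fin, Fintype.card_finset_len, Fintype.card_fin]
    exact h
  set g : Fin n → Finset (Fin (2 * m + 1)) := fun c => (f c).1 with hg
  have hgcard : ∀ c, (g c).card = m := fun c => (f c).2
  have hginj : Function.Injective g := fun a b hab => f.injective (Subtype.ext hab)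
  -- the set of good colors is nonempty for any vertex with a negative coordinate
  have hSne : ∀ v : JVert n 2, (∃ c, v.1 c = -1) → (pmSet g v.1).Nonempty := by
    rintro ⟨w, hw1, hw2⟩ ⟨c0, hc0⟩
    replace hc0 : w c0 = -1 := hc0
    obtain ⟨a, b, hab, hT⟩ := Finset.card_eq_two.mp hw2
    have hmem : ∀ c, w c ≠ 0 ↔ c = a ∨ c = b := by
      intro c
      have := Finset.ext_iff.mp hT c
      simpa using this
    -- main claim for an ordered pair with w a = -1
    have key : ∀ a b : Fin n, a ≠ b → (∀ c, w c ≠ 0 ↔ c = a ∨ c = b) → w a = -1 →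
        (pmSet g w).Nonempty := by
      intro a b hab hmem hwa
      have hwb0 : w b ≠ 0 := (hmem b).mpr (Or.inr rfl)
      rcases hw1 b with hwb | hwb | hwb
      · -- both negative: pick a color outside g a ∪ g b
        have hcard : (g a ∪ g b).card < Fintype.card (Fin (2 * m + 1)) := by
          have := Finset.card_union_le (g a) (g b)
          rw [hgcard, hgcard] at this
          rw [Fintype.card_fin]
          omega
        have hne : ((g a ∪ g b)ᶜ).Nonempty := by
          rw [← Finset.card_pos, Finset.card_compl]
          omega
        obtain ⟨i, hi⟩ := hne
        rw [Finset.mem_compl, Finset.mem_union, not_or] at hi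
        refine ⟨i, Finset.mem_filter.mpr ⟨Finset.mem_univ _, ?_, ?_⟩⟩
        · intro c hc
          rcases (hmem c).mp (by rw [hc]; norm_num) with rfl | rfl
          · rw [hwa] at hc; norm_num at hc
          · rw [hwb] at hc; norm_num at hc
        · intro c hc
          rcases (hmem c).mp (by rw [hc]; norm_num) with rfl | rfl
          · exact hi.1
          · exact hi.2
      · exact absurd hwb hwb0
      · -- w a = -1, w b = 1: pick a color in g b \ g a
        have hsub : ¬ g b ⊆ g a := by
          intro hsub
          have : g b = g a := Finset.eq_of_subset_of_card_le hsub (by rw [hgcard, hgcard])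
          exact hab (hginj this).symm
        obtain ⟨i, hib, hia⟩ := Finset.not_subset.mp hsub
        refine ⟨i, Finset.mem_filter.mpr ⟨Finset.mem_univ _, ?_, ?_⟩⟩
        · intro c hc
          rcases (hmem c).mp (by rw [hc]; norm_num) with rfl | rfl
          · rw [hwa] at hc; norm_num at hc
          · exact hib
        · intro c hc
          rcases (hmem c).mp (by rw [hc]; norm_num) with rfl | rfl
          · exact hia
          · rw [hwb] at hc; norm_num at hc
    rcases (hmem c0).mp (by rw [hc0]; norm_num) with rfl | rfl
    · exact key c0 b hab hmem hc0
    · exact key c0 a (Ne.symm hab) (fun c => (hmem c).trans or_comm) hc0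
  refine ⟨Coloring.mk (fun v => pmColor g v.1) ?_⟩
  rintro u v ⟨hne, hsum⟩
  have hex : ∃ c, (u.1 c = 1 ∧ v.1 c = -1) ∨ (u.1 c = -1 ∧ v.1 c = 1) := by
    by_contra hcon
    push_neg at hcon
    have hnn : ∀ i ∈ Finset.univ, (0:ℤ) ≤ u.1 i * v.1 i := by
      intro i _
      have hci := hcon i
      rcases u.2.1 i with h1 | h1 | h1 <;> rcases v.2.1 i with h2 | h2 | h2 <;>
        simp_all
    have := Finset.sum_nonneg hnn
    rw [hsum] at this
    norm_num at this
  obtain ⟨c, hc | hc⟩ := hex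
  · exact pmColor_ne g u.1 v.1 c hc.1 hc.2 (hSne v ⟨c, hc.2⟩)
  · exact (pmColor_ne g v.1 u.1 c hc.2 hc.1 (hSne u ⟨c, hc.1⟩)).symm
end

section
/- There is a constant c > 0 such that for every independent set I in J_±(n,3,-1), the number of special vertices of I (those whose support contains a diverse coordinate) is at most c·n². -/
open SimpleGraph Finset

lemma pair_bound {n : ℕ} (i j : Fin n) (hij : i ≠ j) (S : Finset (JVert n 3))
    (hS : ∀ v ∈ S, v.1 i ≠ 0 ∧ v.1 j ≠ 0) : S.card ≤ 63 * (n + 1) := by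
  classical
  have key : S.card ≤ ((Finset.univ : Finset (Option (Fin n))) ×ˢ
      (Finset.Icc (-1:ℤ) 1 ×ˢ (Finset.Icc (-1:ℤ) 1 ×ˢ Finset.Icc (-3:ℤ) 3))).card := by
    apply Finset.card_le_card_of_injOn
      (fun v => ((Finset.univ.filter (fun l => v.1 l ≠ 0) \ {i, j}).min,
        v.1 i, v.1 j, ∑ l, v.1 l))
    · intro v _
      have hrange : ∀ l, -1 ≤ v.1 l ∧ v.1 l ≤ 1 := by
        intro l; rcases v.2.1 l with h|h|h <;> rw [h] <;> norm_num
      have hsum : |∑ l, v.1 l| ≤ 3 := by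
        rw [← Finset.sum_filter_ne_zero Finset.univ]
        calc |∑ l ∈ Finset.univ.filter (fun l => v.1 l ≠ 0), v.1 l|
            ≤ ∑ l ∈ Finset.univ.filter (fun l => v.1 l ≠ 0), |v.1 l| :=
              Finset.abs_sum_le_sum_abs _ _
          _ ≤ ∑ _l ∈ Finset.univ.filter (fun l => v.1 l ≠ 0), 1 :=
              Finset.sum_le_sum (fun l _ => abs_le.mpr (hrange l))
          _ = 3 := by rw [Finset.sum_const, v.2.2]; simp
      have hsum' := abs_le.mp hsum
      apply Finset.mem_coe.mpr
      exact Finset.mem_product.mpr ⟨Finset.mem_univ _, Finset.mem_product.mpr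
        ⟨Finset.mem_Icc.mpr (hrange i), Finset.mem_product.mpr
          ⟨Finset.mem_Icc.mpr (hrange j), Finset.mem_Icc.mpr hsum'⟩⟩⟩
    · intro u hu v hv h
      simp only [Prod.mk.injEq] at h
      obtain ⟨hmin, ha, hb, hsum⟩ := h
      have hijmem : ∀ w : JVert n 3, w ∈ S →
          ({i, j} : Finset (Fin n)) ⊆ Finset.univ.filter (fun l => w.1 l ≠ 0) := by
        intro w hw
        intro l hl
        simp only [Finset.mem_insert, Finset.mem_singleton] at hl
        rcases hl with rfl | rfl <;> simp [(hS w hw).1, (hS w hw).2]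
      have hcard : ∀ w : JVert n 3, w ∈ S →
          ((Finset.univ.filter (fun l => w.1 l ≠ 0)) \ {i, j}).card = 1 := by
        intro w hw
        rw [Finset.card_sdiff_of_subset (hijmem w hw), w.2.2, Finset.card_pair hij]
      obtain ⟨k, hk⟩ := Finset.card_eq_one.mp (hcard u hu)
      obtain ⟨k', hk'⟩ := Finset.card_eq_one.mp (hcard v hv)
      have hkk : k = k' := by
        rw [hk, hk'] at hmin
        rw [Finset.min_singleton, Finset.min_singleton] at hmin
        exact Option.some_injective _ hmin
      subst hkk
      have hkmem : ∀ w : JVert n 3, (Finset.univ.filter (fun l => w.1 l ≠ 0)) \ {i, j} = {k} →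
          k ∈ Finset.univ.filter (fun l => w.1 l ≠ 0) ∧ k ≠ i ∧ k ≠ j := by
        intro w hw
        have : k ∈ (Finset.univ.filter (fun l => w.1 l ≠ 0)) \ {i, j} := by
          rw [hw]; exact Finset.mem_singleton_self k
        rw [Finset.mem_sdiff] at this
        refine ⟨this.1, ?_, ?_⟩ <;> intro hc <;> apply this.2 <;> simp [hc]
      obtain ⟨hku, hki, hkj⟩ := hkmem u hk
      obtain ⟨hkv, -, -⟩ := hkmem v hk'
      have hcard3 : ({i, j, k} : Finset (Fin n)).card = 3 := by
        rw [Finset.card_insert_of_notMem (by simp [hij, Ne.symm hki]),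
          Finset.card_insert_of_notMem (by simp [Ne.symm hkj]), Finset.card_singleton]
      have hsupp : ∀ w : JVert n 3, w ∈ S → k ∈ Finset.univ.filter (fun l => w.1 l ≠ 0) →
          Finset.univ.filter (fun l => w.1 l ≠ 0) = {i, j, k} := by
        intro w hw hkw
        refine (Finset.eq_of_subset_of_card_le ?_ ?_).symm
        · intro l hl
          simp only [Finset.mem_insert, Finset.mem_singleton] at hl
          rcases hl with rfl | rfl | rfl
          · exact (hijmem w hw) (by simp)
          · exact (hijmem w hw) (by simp)
          · exact hkw
        · rw [w.2.2, hcard3]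
      have hsumdec : ∀ w : JVert n 3, w ∈ S → k ∈ Finset.univ.filter (fun l => w.1 l ≠ 0) →
          ∑ l, w.1 l = w.1 i + (w.1 j + w.1 k) := by
        intro w hw hkw
        rw [← Finset.sum_filter_ne_zero Finset.univ, hsupp w hw hkw,
          Finset.sum_insert (by simp [hij, Ne.symm hki]),
          Finset.sum_insert (by simp [Ne.symm hkj]), Finset.sum_singleton]
      have hck : u.1 k = v.1 k := by
        have e1 := hsumdec u hu hku
        have e2 := hsumdec v hv hkv
        rw [e1, e2, ha, hb] at hsum
        linarith
      apply Subtype.ext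
      funext l
      by_cases hli : l = i; · rw [hli]; exact ha
      by_cases hlj : l = j; · rw [hlj]; exact hb
      by_cases hlk : l = k; · rw [hlk]; exact hck
      have hzu : u.1 l = 0 := by
        by_contra hc
        have : l ∈ Finset.univ.filter (fun m => u.1 m ≠ 0) := by simp [hc]
        rw [hsupp u hu hku] at this
        simp only [Finset.mem_insert, Finset.mem_singleton] at this
        tauto
      have hzv : v.1 l = 0 := by
        by_contra hc
        have : l ∈ Finset.univ.filter (fun m => v.1 m ≠ 0) := by simp [hc]
        rw [hsupp v hv hkv] at this
        simp only [Finset.mem_insert, Finset.mem_singleton] at this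
        tauto
      rw [hzu, hzv]
  calc S.card ≤ _ := key
    _ ≤ 63 * (n + 1) := by
      rw [Finset.card_product, Finset.card_product, Finset.card_product]
      simp [Int.card_Icc]
      ring_nf
      omega

lemma exists_other {n : ℕ} (v w : JVert n 3) (i : Fin n) (hvw : v.1 i * w.1 i = -1)
    (hne : ∑ l, v.1 l * w.1 l ≠ -1) : ∃ j, j ≠ i ∧ v.1 j ≠ 0 ∧ w.1 j ≠ 0 := by
  by_contra hc
  push_neg at hc
  apply hne
  rw [← Finset.sum_erase_add Finset.univ _ (Finset.mem_univ i), hvw]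
  have hzero : ∑ l ∈ Finset.univ.erase i, v.1 l * w.1 l = 0 := by
    apply Finset.sum_eq_zero
    intro j hj
    have hj' : j ≠ i := Finset.ne_of_mem_erase hj
    by_cases hvz : v.1 j = 0
    · rw [hvz, zero_mul]
    · rw [hc j hj' hvz, mul_zero]
  rw [hzero, zero_add]

lemma diverse_bound {n : ℕ} (I : Finset (JVert n 3))
    (hind : ∀ u ∈ I, ∀ v ∈ I, ¬ (Jpm n 3 (-1)).Adj u v)
    (i : Fin n) (wp wm : JVert n 3) (hwp : wp ∈ I) (hwpi : wp.1 i = 1)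
    (hwm : wm ∈ I) (hwmi : wm.1 i = -1) :
    (I.filter (fun v => v.1 i ≠ 0)).card ≤ 378 * (n + 1) := by
  classical
  set J := ((Finset.univ.filter (fun l => wp.1 l ≠ 0)) ∪
    (Finset.univ.filter (fun l => wm.1 l ≠ 0))).erase i with hJ
  have hJcard : J.card ≤ 6 := by
    calc J.card ≤ ((Finset.univ.filter (fun l => wp.1 l ≠ 0)) ∪
          (Finset.univ.filter (fun l => wm.1 l ≠ 0))).card := Finset.card_erase_le
      _ ≤ (Finset.univ.filter (fun l => wp.1 l ≠ 0)).card +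
          (Finset.univ.filter (fun l => wm.1 l ≠ 0)).card := Finset.card_union_le _ _
      _ ≤ 6 := by rw [wp.2.2, wm.2.2]
  have hsub : I.filter (fun v => v.1 i ≠ 0) ⊆
      J.biUnion (fun j => I.filter (fun v => v.1 i ≠ 0 ∧ v.1 j ≠ 0)) := by
    intro v hv
    rw [Finset.mem_filter] at hv
    obtain ⟨hvI, hvi⟩ := hv
    rw [Finset.mem_biUnion]
    rcases v.2.1 i with h|h|h
    · -- v_i = -1, use wp
      have hvne : v ≠ wp := fun hc => by rw [hc, hwpi] at h; norm_num at h
      have hne : ∑ l, v.1 l * wp.1 l ≠ -1 := by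
        intro hs
        exact hind v hvI wp hwp ⟨hvne, hs⟩
      obtain ⟨j, hji, hvj, hwj⟩ := exists_other v wp i (by rw [h, hwpi]; ring) hne
      refine ⟨j, ?_, ?_⟩
      · rw [hJ, Finset.mem_erase]
        exact ⟨hji, Finset.mem_union_left _ (by simp [hwj])⟩
      · simp [Finset.mem_filter, hvI, hvi, hvj]
    · exact absurd h hvi
    · -- v_i = 1, use wm
      have hvne : v ≠ wm := fun hc => by rw [hc, hwmi] at h; norm_num at h
      have hne : ∑ l, v.1 l * wm.1 l ≠ -1 := by
        intro hs
        exact hind v hvI wm hwm ⟨hvne, hs⟩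
      obtain ⟨j, hji, hvj, hwj⟩ := exists_other v wm i (by rw [h, hwmi]; ring) hne
      refine ⟨j, ?_, ?_⟩
      · rw [hJ, Finset.mem_erase]
        exact ⟨hji, Finset.mem_union_right _ (by simp [hwj])⟩
      · simp [Finset.mem_filter, hvI, hvi, hvj]
  calc (I.filter (fun v => v.1 i ≠ 0)).card
      ≤ (J.biUnion (fun j => I.filter (fun v => v.1 i ≠ 0 ∧ v.1 j ≠ 0))).card :=
        Finset.card_le_card hsub
    _ ≤ ∑ j ∈ J, (I.filter (fun v => v.1 i ≠ 0 ∧ v.1 j ≠ 0)).card :=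
        Finset.card_biUnion_le
    _ ≤ ∑ _j ∈ J, 63 * (n + 1) := by
        apply Finset.sum_le_sum
        intro j hj
        have hji : j ≠ i := Finset.ne_of_mem_erase hj
        exact pair_bound i j hji.symm _ (fun v hv => by
          rw [Finset.mem_filter] at hv; exact hv.2)
    _ = J.card * (63 * (n + 1)) := by rw [Finset.sum_const, smul_eq_mul]
    _ ≤ 6 * (63 * (n + 1)) := Nat.mul_le_mul_right _ hJcard
    _ = 378 * (n + 1) := by ring

/-- There is a constant `c > 0` such that any independent set in `J_±(n,3,-1)`
has at most `c n²` special vertices (vertices whose support contains a diverse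
coordinate). -/
theorem special_vertices_bound :
    ∃ c : ℝ, 0 < c ∧ ∀ (n : ℕ) (I : Finset (JVert n 3)),
      (∀ u ∈ I, ∀ v ∈ I, ¬ (Jpm n 3 (-1)).Adj u v) →
      (Nat.card {v : JVert n 3 // v ∈ I ∧ ∃ i, v.1 i ≠ 0 ∧
        (∃ w ∈ I, w.1 i = 1) ∧ (∃ w ∈ I, w.1 i = -1)} : ℝ) ≤ c * n ^ 2 := by
  classical
  refine ⟨1000, by norm_num, ?_⟩
  intro n I hind
  set P : JVert n 3 → Prop := fun v => ∃ i, v.1 i ≠ 0 ∧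
    (∃ w ∈ I, w.1 i = 1) ∧ (∃ w ∈ I, w.1 i = -1) with hP
  have h1 : Nat.card {v : JVert n 3 // v ∈ I ∧ P v} = (I.filter P).card := by
    rw [← Nat.card_eq_finsetCard]
    exact Nat.card_congr (Equiv.subtypeEquivRight (fun v => (Finset.mem_filter).symm))
  have h2 : (I.filter P).card ≤ n * (378 * (n + 1)) := by
    have hsub : I.filter P ⊆ Finset.univ.biUnion (fun i : Fin n =>
        if (∃ w ∈ I, w.1 i = 1) ∧ (∃ w ∈ I, w.1 i = -1) then
          I.filter (fun v => v.1 i ≠ 0) else ∅) := by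
      intro v hv
      rw [Finset.mem_filter] at hv
      obtain ⟨hvI, i, hvi, hd1, hd2⟩ := hv
      rw [Finset.mem_biUnion]
      refine ⟨i, Finset.mem_univ _, ?_⟩
      rw [if_pos ⟨hd1, hd2⟩, Finset.mem_filter]
      exact ⟨hvI, hvi⟩
    calc (I.filter P).card
        ≤ ∑ i : Fin n, (if (∃ w ∈ I, w.1 i = 1) ∧ (∃ w ∈ I, w.1 i = -1) then
            I.filter (fun v => v.1 i ≠ 0) else ∅).card :=
          le_trans (Finset.card_le_card hsub) Finset.card_biUnion_le
      _ ≤ ∑ _i : Fin n, 378 * (n + 1) := by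
          apply Finset.sum_le_sum
          intro i _
          by_cases h : (∃ w ∈ I, w.1 i = 1) ∧ (∃ w ∈ I, w.1 i = -1)
          · rw [if_pos h]
            obtain ⟨⟨wp, hwp, hwpi⟩, ⟨wm, hwm, hwmi⟩⟩ := h
            exact diverse_bound I hind i wp wm hwp hwpi hwm hwmi
          · rw [if_neg h]
            simp
      _ = n * (378 * (n + 1)) := by rw [Finset.sum_const, smul_eq_mul, Finset.card_univ,
          Fintype.card_fin]
  have h3 : n * (378 * (n + 1)) ≤ 1000 * n ^ 2 := by
    have hn : n ≤ n ^ 2 := Nat.le_self_pow (by norm_num) n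
    nlinarith
  have hnat : Nat.card {v : JVert n 3 // v ∈ I ∧ P v} ≤ 1000 * n ^ 2 :=
    h1 ▸ (h2.trans h3)
  calc (Nat.card {v : JVert n 3 // v ∈ I ∧ P v} : ℝ)
      ≤ ((1000 * n ^ 2 : ℕ) : ℝ) := by exact_mod_cast hnat
    _ = 1000 * (n : ℝ) ^ 2 := by push_cast; ring
end

section
/- There exist positive constants c and C such that for all n > 3, c·log₂ n ≤ χ(J_±(n,3,-1)) ≤ C·log₂ n. -/
open SimpleGraph Finset

namespace JP
variable {n : ℕ}

def ind (a : Fin n) : Fin n → ℤ := fun x => if x = a then 1 else 0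

lemma sum_mul_ind (f : Fin n → ℤ) (t : Fin n) : ∑ x, f x * ind t x = f t := by
  simp [ind, mul_ite]

def tri (a b c : Fin n) : Fin n → ℤ := fun x => ind a x - ind b x + ind c x

lemma sum_mul_tri (f : Fin n → ℤ) (a b c : Fin n) :
    ∑ x, f x * tri a b c x = f a - f b + f c := by
  simp only [tri, mul_sub, mul_add, Finset.sum_add_distrib, Finset.sum_sub_distrib,
    sum_mul_ind]

lemma tri_mem (a b c : Fin n) (hab : a ≠ b) (hac : a ≠ c) (hbc : b ≠ c) :
    (∀ i, tri a b c i = -1 ∨ tri a b c i = 0 ∨ tri a b c i = 1) ∧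
    (Finset.univ.filter (fun i => tri a b c i ≠ 0)).card = 3 := by
  constructor
  · intro x
    by_cases h1 : x = a <;> by_cases h2 : x = b <;> by_cases h3 : x = c <;>
      simp_all [tri, ind]
  · have : (Finset.univ.filter (fun i => tri a b c i ≠ 0)) = {a, b, c} := by
      ext x
      simp only [Finset.mem_filter, Finset.mem_univ, true_and, Finset.mem_insert,
        Finset.mem_singleton]
      by_cases h1 : x = a <;> by_cases h2 : x = b <;> by_cases h3 : x = c <;>
        simp_all [tri, ind]
    rw [this]
    rw [Finset.card_insert_of_notMem (by simp [hab, hac]),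
      Finset.card_insert_of_notMem (by simp [hbc]), Finset.card_singleton]

lemma lower (n t : ℕ) (hn : 4 ≤ n) (hcol : (Jpm n 3 (-1)).Colorable t) :
    n / 2 ≤ 2 ^ t := by
  classical
  obtain ⟨C⟩ := hcol
  set m := n / 2 with hm
  have hm2 : 2 ≤ m := by omega
  have hmn : m + m ≤ n := by omega
  have hlow : ∀ i : Fin m, (i : ℕ) < n := fun i => by have := i.2; omega
  have hhigh : ∀ j : Fin m, m + (j : ℕ) < n := fun j => by have := j.2; omega
  set low : Fin m → Fin n := fun i => ⟨i, hlow i⟩ with hlowdef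
  set high : Fin m → Fin n := fun j => ⟨m + j, hhigh j⟩ with hhighdef
  have hne1 : ∀ i j : Fin m, i ≠ j → low i ≠ low j := by
    intro i j hij h
    apply hij
    apply Fin.ext
    simpa [hlowdef, Fin.ext_iff] using h
  have hne2 : ∀ i j : Fin m, low i ≠ high j := by
    intro i j h
    have := i.2
    simp only [hlowdef, hhighdef, Fin.ext_iff] at h
    omega
  have hmem : ∀ i j : Fin m, i ≠ j →
      (∀ x, tri (low i) (low j) (high j) x = -1 ∨ tri (low i) (low j) (high j) x = 0 ∨
        tri (low i) (low j) (high j) x = 1) ∧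
      (Finset.univ.filter (fun x => tri (low i) (low j) (high j) x ≠ 0)).card = 3 :=
    fun i j hij => tri_mem _ _ _ (hne1 i j hij) (hne2 i j) (hne2 j j)
  have hW : ∃ W : Fin m → Fin m → JVert n 3, ∀ i j : Fin m, i < j →
      (W i j).1 = tri (low i) (low j) (high j) := by
    have v0 : JVert n 3 := ⟨tri (low ⟨0, by omega⟩) (low ⟨1, by omega⟩) (high ⟨1, by omega⟩),
      hmem _ _ (by simp [Fin.ext_iff])⟩
    refine ⟨fun i j => if h : i < j then ⟨_, hmem i j h.ne⟩ else v0, ?_⟩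
    intro i j h
    simp [h]
  obtain ⟨W, hWdef⟩ := hW
  have hadj : ∀ i j k : Fin m, i < j → j < k →
      (Jpm n 3 (-1)).Adj (W i j) (W j k) := by
    intro i j k hij hjk
    have hij' := Fin.lt_def.mp hij
    have hjk' := Fin.lt_def.mp hjk
    have hi2 := i.2
    have hj2 := j.2
    have hk2 := k.2
    constructor
    · intro h
      have h2 := congrFun (congrArg Subtype.val h) (low j)
      rw [hWdef i j hij, hWdef j k hjk] at h2
      simp only [tri, ind, hlowdef, hhighdef, Fin.mk.injEq] at h2
      split_ifs at h2 <;> omega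
    · show ∑ x, (W i j).1 x * (W j k).1 x = -1
      rw [hWdef i j hij, hWdef j k hjk, sum_mul_tri]
      simp only [tri, ind, hlowdef, hhighdef, Fin.mk.injEq]
      split_ifs <;> omega
  set A : Fin m → Finset (Fin t) :=
    fun i => (Finset.univ.filter (fun j => i < j)).image (fun j => C (W i j)) with hA
  have hAkey : ∀ i j : Fin m, i < j → A i ≠ A j := by
    intro i j hij h
    have h1 : C (W i j) ∈ A i := by
      rw [hA]
      exact Finset.mem_image.mpr ⟨j, by simp [hij], rfl⟩
    rw [h, hA] at h1
    obtain ⟨k, hk, hck⟩ := Finset.mem_image.mp h1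
    have hjk : j < k := by simpa using (Finset.mem_filter.mp hk).2
    exact C.valid (hadj i j k hij hjk) hck.symm
  have hAinj : Function.Injective A := by
    intro i j h
    by_contra hne
    rcases lt_or_gt_of_ne hne with h1 | h1
    · exact hAkey i j h1 h
    · exact hAkey j i h1 h.symm
  have := Fintype.card_le_of_injective A hAinj
  simpa using this

def Univ3 {n k : ℕ} (M : Fin n → Fin k → Bool) : Prop :=
  ∀ x y z : Fin n, x ≠ y → x ≠ z → y ≠ z →
    ∀ p : Bool × Bool × Bool, ∃ ℓ, (M x ℓ, M y ℓ, M z ℓ) = p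

lemma bad_card (n k : ℕ) (x y z : Fin n) (hxy : x ≠ y) (hxz : x ≠ z) (hyz : y ≠ z)
    (p : Bool × Bool × Bool) :
    (Finset.univ.filter (fun M : Fin n → Fin k → Bool =>
        ∀ ℓ, (M x ℓ, M y ℓ, M z ℓ) ≠ p)).card ≤ 7 ^ k * 2 ^ (k * (n - 3)) := by
  classical
  set s : Finset (Fin n → Fin k → Bool) :=
    Finset.univ.filter (fun M => ∀ ℓ, (M x ℓ, M y ℓ, M z ℓ) ≠ p) with hs
  have hcard3 : ({x, y, z} : Finset (Fin n)).card = 3 := by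
    rw [Finset.card_insert_of_notMem (by simp [hxy, hxz]),
      Finset.card_insert_of_notMem (by simp [hyz]), Finset.card_singleton]
  let T := (Fin k → {q : Bool × Bool × Bool // q ≠ p}) ×
    (((({x, y, z} : Finset (Fin n))ᶜ : Finset (Fin n)) : Type) → Fin k → Bool)
  let F : {M // M ∈ s} → T := fun M =>
    (fun ℓ => ⟨(M.1 x ℓ, M.1 y ℓ, M.1 z ℓ), (Finset.mem_filter.mp M.2).2 ℓ⟩,
     fun j ℓ => M.1 j.1 ℓ)
  have hF : Function.Injective F := by
    intro M M' h
    have h1 := congrArg Prod.fst h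
    have h2 := congrArg Prod.snd h
    apply Subtype.ext
    funext j ℓ
    by_cases hjx : j = x
    · subst hjx
      have := congrArg Subtype.val (congrFun h1 ℓ)
      exact congrArg (fun q => q.1) this
    by_cases hjy : j = y
    · subst hjy
      have := congrArg Subtype.val (congrFun h1 ℓ)
      exact congrArg (fun q => q.2.1) this
    by_cases hjz : j = z
    · subst hjz
      have := congrArg Subtype.val (congrFun h1 ℓ)
      exact congrArg (fun q => q.2.2) this
    · have hj : j ∈ (({x, y, z} : Finset (Fin n))ᶜ : Finset (Fin n)) := by
        simp [hjx, hjy, hjz]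
      exact congrFun (congrFun h2 ⟨j, hj⟩) ℓ
  have := Fintype.card_le_of_injective F hF
  rw [Fintype.card_coe] at this
  calc s.card ≤ Fintype.card T := this
    _ = 7 ^ k * 2 ^ (k * (n - 3)) := by
        have hc : Fintype.card {q : Bool × Bool × Bool // q ≠ p} = 7 := by
          rw [Fintype.card_subtype_compl]
          simp
        have hcompl : (({x, y, z} : Finset (Fin n))ᶜ : Finset (Fin n)).card = n - 3 := by
          rw [Finset.card_compl, hcard3]
          simp
        simp only [T, Fintype.card_prod, Fintype.card_fun, hc, Fintype.card_coe, hcompl,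
          Fintype.card_bool, Fintype.card_fin]
        rw [← pow_mul, Nat.mul_comm]

  done

lemma exists_univ3 (n k : ℕ)
    (hk : (n * (n * n) * 8) * (7 ^ k * 2 ^ (k * (n - 3))) < 2 ^ (k * n)) :
    ∃ M : Fin n → Fin k → Bool, Univ3 M := by
  classical
  by_contra hcon
  push_neg at hcon
  simp only [Univ3] at hcon
  push_neg at hcon
  set bound := 7 ^ k * 2 ^ (k * (n - 3)) with hb
  set idx := (Finset.univ : Finset ((Fin n × Fin n × Fin n) × (Bool × Bool × Bool))).filter
      (fun t => t.1.1 ≠ t.1.2.1 ∧ t.1.1 ≠ t.1.2.2 ∧ t.1.2.1 ≠ t.1.2.2) with hidx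
  have hsub : (Finset.univ : Finset (Fin n → Fin k → Bool)) ⊆
      idx.biUnion (fun t => Finset.univ.filter
        (fun M => ∀ ℓ, (M t.1.1 ℓ, M t.1.2.1 ℓ, M t.1.2.2 ℓ) ≠ t.2)) := by
    intro M _
    obtain ⟨x, y, z, hxy, hxz, hyz, p, hp⟩ := hcon M
    refine Finset.mem_biUnion.mpr ⟨((x, y, z), p), ?_, ?_⟩
    · simp [hidx, hxy, hxz, hyz]
    · simp only [Finset.mem_filter, Finset.mem_univ, true_and]
      exact hp
  have h1 : (Finset.univ : Finset (Fin n → Fin k → Bool)).card ≤ idx.card * bound := by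
    calc (Finset.univ : Finset (Fin n → Fin k → Bool)).card
        ≤ (idx.biUnion _).card := Finset.card_le_card hsub
      _ ≤ ∑ t ∈ idx, (Finset.univ.filter
            (fun M : Fin n → Fin k → Bool =>
              ∀ ℓ, (M t.1.1 ℓ, M t.1.2.1 ℓ, M t.1.2.2 ℓ) ≠ t.2)).card :=
          Finset.card_biUnion_le
      _ ≤ ∑ _t ∈ idx, bound := by
          refine Finset.sum_le_sum ?_
          intro t ht
          rw [hidx] at ht
          obtain ⟨-, h1, h2, h3⟩ := Finset.mem_filter.mp ht
          exact bad_card n k _ _ _ h1 h2 h3 t.2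
      _ = idx.card * bound := by rw [Finset.sum_const, smul_eq_mul]
  have h2 : idx.card ≤ n * (n * n) * 8 := by
    calc idx.card ≤ (Finset.univ : Finset ((Fin n × Fin n × Fin n) × (Bool × Bool × Bool))).card :=
        Finset.card_le_card (Finset.filter_subset _ _)
      _ = n * (n * n) * 8 := by
          simp [Finset.card_univ]
  have h3 : (Finset.univ : Finset (Fin n → Fin k → Bool)).card = 2 ^ (k * n) := by
    simp [Finset.card_univ, Fintype.card_fun]
    rw [← pow_mul, Nat.mul_comm]
  have : (2:ℕ) ^ (k*n) ≤ n * (n * n) * 8 * bound := by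
    rw [← h3]
    calc #univ ≤ #idx * bound := h1
      _ ≤ n * (n * n) * 8 * bound := Nat.mul_le_mul_right _ h2
  exact absurd hk (not_lt.mpr this)

lemma numeric (n : ℕ) (hn : 4 ≤ n) :
    (n * (n * n) * 8) * (7 ^ (40 * Nat.clog 2 n) * 2 ^ ((40 * Nat.clog 2 n) * (n - 3)))
      < 2 ^ ((40 * Nat.clog 2 n) * n) := by
  set L := Nat.clog 2 n with hL
  set k := 40 * L with hk
  have hL2 : 2 ≤ L := by
    have h4 : Nat.clog 2 4 ≤ L := Nat.clog_mono_right 2 hn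
    have : Nat.clog 2 4 = 2 := by
      rw [show (4:ℕ) = 2 ^ 2 by norm_num, Nat.clog_pow 2 2 one_lt_two]
    omega
  have hnL : n ≤ 2 ^ L := Nat.le_pow_clog one_lt_two n
  have key : n * (n * n) * 8 * 7 ^ k < 2 ^ (3 * k) := by
    have h1 : n * (n * n) * 8 ≤ 2 ^ (3 * L + 3) := by
      calc n * (n * n) * 8 ≤ 2^L * (2^L * 2^L) * 8 :=
            Nat.mul_le_mul_right 8 (Nat.mul_le_mul hnL (Nat.mul_le_mul hnL hnL))
        _ = 2 ^ (3 * L + 3) := by ring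
    have h2 : (7:ℕ) ^ k < 2 ^ (115 * L) := by
      have h740 : (7:ℕ) ^ 40 < 2 ^ 115 := by norm_num
      calc (7:ℕ) ^ k = (7 ^ 40) ^ L := by rw [hk, pow_mul]
        _ < (2 ^ 115) ^ L := Nat.pow_lt_pow_left h740 (by omega)
        _ = 2 ^ (115 * L) := by rw [← pow_mul]
    calc n * (n * n) * 8 * 7 ^ k ≤ 2 ^ (3*L+3) * 7 ^ k :=
          Nat.mul_le_mul_right _ h1
      _ < 2 ^ (3*L+3) * 2 ^ (115*L) := by gcongr <;> norm_num
      _ = 2 ^ (118 * L + 3) := by rw [← pow_add]; congr 1; ring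
      _ ≤ 2 ^ (3 * k) := Nat.pow_le_pow_right (by norm_num) (by omega)
  calc (n * (n*n) * 8) * (7^k * 2^(k*(n-3)))
      = (n * (n*n) * 8 * 7^k) * 2^(k*(n-3)) := by ring
    _ < 2^(3*k) * 2^(k*(n-3)) := by gcongr <;> norm_num
    _ = 2 ^ (k * n) := by
        rw [← pow_add]; congr 1
        obtain ⟨m, rfl⟩ : ∃ m, n = m + 3 := ⟨n - 3, by omega⟩
        rw [Nat.add_sub_cancel]; ring

lemma colorable_of_univ3 {n k : ℕ} (M : Fin n → Fin k → Bool) (hM : Univ3 M) :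
    (Jpm n 3 (-1)).Colorable k := by
  classical
  have hex : ∀ v : JVert n 3, ∃ ℓ : Fin k,
      ∀ x, (v.1 x = 1 → M x ℓ = true) ∧ (v.1 x = -1 → M x ℓ = false) := by
    intro v
    obtain ⟨hrange, hcard⟩ := v.2
    obtain ⟨x, y, z, hxy, hxz, hyz, hxyz⟩ := Finset.card_eq_three.mp hcard
    obtain ⟨ℓ, hℓ⟩ := hM x y z hxy hxz hyz
      (decide (v.1 x = 1), decide (v.1 y = 1), decide (v.1 z = 1))
    rw [Prod.mk.injEq, Prod.mk.injEq] at hℓ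
    obtain ⟨hx, hy, hz⟩ := hℓ
    refine ⟨ℓ, fun w => ?_⟩
    by_cases hwx : w = x
    · subst hwx
      constructor
      · intro h1; rw [hx, h1]; simp
      · intro h1; rw [hx, h1]; simp
    by_cases hwy : w = y
    · subst hwy
      constructor
      · intro h1; rw [hy, h1]; simp
      · intro h1; rw [hy, h1]; simp
    by_cases hwz : w = z
    · subst hwz
      constructor
      · intro h1; rw [hz, h1]; simp
      · intro h1; rw [hz, h1]; simp
    · have hw0 : v.1 w = 0 := by
        by_contra h0
        have : w ∈ Finset.univ.filter (fun i => v.1 i ≠ 0) := by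
          simp [h0]
        rw [hxyz] at this
        simp only [Finset.mem_insert, Finset.mem_singleton] at this
        tauto
      constructor
      · intro h1; rw [hw0] at h1; exact absurd h1 (by norm_num)
      · intro h1; rw [hw0] at h1; exact absurd h1 (by norm_num)
  refine ⟨SimpleGraph.Coloring.mk (fun v => Classical.choose (hex v)) ?_⟩
  intro u v hadj heq
  have hu := Classical.choose_spec (hex u)
  have hv := Classical.choose_spec (hex v)
  rw [← heq] at hv
  have hterm : ∀ i, (0:ℤ) ≤ u.1 i * v.1 i := by
    intro i
    rcases u.2.1 i with h1 | h1 | h1 <;> rcases v.2.1 i with h2 | h2 | h2 <;>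
      rw [h1, h2] <;> norm_num
    · have := ((hu i).2 h1)
      have := ((hv i).1 h2)
      simp_all
    · have := ((hu i).1 h1)
      have := ((hv i).2 h2)
      simp_all
  have hsum : (0:ℤ) ≤ ∑ i, u.1 i * v.1 i := Finset.sum_nonneg (fun i _ => hterm i)
  rw [hadj.2] at hsum
  norm_num at hsum

end JP

/-- `χ(J_±(n,3,-1)) = Θ(log n)`. -/
theorem Jpm_three_neg_one_chromatic :
    ∃ c C : ℝ, 0 < c ∧ 0 < C ∧ ∀ n : ℕ, 3 < n →
      c * Real.logb 2 n ≤ ((Jpm n 3 (-1)).chromaticNumber.toNat : ℝ) ∧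
      ((Jpm n 3 (-1)).chromaticNumber.toNat : ℝ) ≤ C * Real.logb 2 n := by
  refine ⟨1/3, 80, by norm_num, by norm_num, ?_⟩
  intro n hn
  have hn4 : 4 ≤ n := hn
  set k := 40 * Nat.clog 2 n with hkdef
  obtain ⟨M, hM⟩ := JP.exists_univ3 n k (JP.numeric n hn4)
  have hcolk : (Jpm n 3 (-1)).Colorable k := JP.colorable_of_univ3 M hM
  have hχle : (Jpm n 3 (-1)).chromaticNumber ≤ (k : ℕ∞) := hcolk.chromaticNumber_le
  set t := (Jpm n 3 (-1)).chromaticNumber.toNat with ht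
  have htk : t ≤ k := by
    have h1 : (Jpm n 3 (-1)).chromaticNumber.toNat ≤ ((k : ℕ∞)).toNat :=
      ENat.toNat_le_toNat hχle (by simp)
    simpa using h1
  have hcolt : (Jpm n 3 (-1)).Colorable t := SimpleGraph.colorable_chromaticNumber hcolk
  have hlow : n / 2 ≤ 2 ^ t := JP.lower n t hn4 hcolt
  have ht1 : 1 ≤ t := by
    rcases Nat.eq_zero_or_pos t with h | h
    · rw [h] at hlow; simp at hlow; omega
    · exact h
  have hnpos : (0:ℝ) < n := by positivity
  have hreal : (n : ℝ) ≤ 4 * 2 ^ t := by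
    have h1 : n ≤ 4 * (n / 2) := by omega
    have h2 : (n:ℝ) ≤ 4 * ((n / 2 : ℕ) : ℝ) := by exact_mod_cast h1
    have h3 : ((n / 2 : ℕ) : ℝ) ≤ 2 ^ t := by exact_mod_cast hlow
    nlinarith
  have hlogup : Real.logb 2 n ≤ t + 2 := by
    have h1 : Real.logb 2 n ≤ Real.logb 2 (4 * 2 ^ t) :=
      Real.logb_le_logb_of_le (by norm_num) hnpos hreal
    have h2 : Real.logb 2 (4 * 2 ^ t) = 2 + t := by
      rw [Real.logb_mul (by norm_num) (by positivity)]
      rw [show (4:ℝ) = 2 ^ (2:ℕ) by norm_num, Real.logb_pow, Real.logb_pow,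
        Real.logb_self_eq_one (by norm_num)]
      push_cast
      ring
    linarith
  constructor
  · rcases le_or_gt (Real.logb 2 n) 3 with hc | hc
    · have h0 : (0:ℝ) ≤ Real.logb 2 n := Real.logb_nonneg (by norm_num)
        (by exact_mod_cast Nat.one_le_iff_ne_zero.mpr (by omega))
      calc 1/3 * Real.logb 2 n ≤ 1/3 * 3 := by nlinarith
        _ = 1 := by norm_num
        _ ≤ t := by exact_mod_cast ht1
    · have h1 : Real.logb 2 n - 2 ≤ t := by linarith
      nlinarith
  · have hc2 : 2 ≤ Nat.clog 2 n := by
      have h4 : Nat.clog 2 4 ≤ Nat.clog 2 n := Nat.clog_mono_right 2 hn4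
      have : Nat.clog 2 4 = 2 := by
        rw [show (4:ℕ) = 2 ^ 2 by norm_num, Nat.clog_pow 2 2 one_lt_two]
      omega
    have hclog : ((Nat.clog 2 n : ℕ) : ℝ) ≤ 2 * Real.logb 2 n := by
      set c := Nat.clog 2 n with hc
      have hpow : (2:ℕ) ^ (c - 1) < n := Nat.pow_pred_clog_lt_self one_lt_two (by omega)
      have hpowR : (2:ℝ) ^ (c - 1 : ℕ) ≤ (n:ℝ) := by exact_mod_cast hpow.le
      have h1 : ((c - 1 : ℕ) : ℝ) ≤ Real.logb 2 n := by
        have h2 := Real.logb_le_logb_of_le (b := 2) (by norm_num) (by positivity) hpowR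
        rwa [Real.logb_pow, Real.logb_self_eq_one (by norm_num), mul_one]
          at h2
      have h2 : ((c - 1 : ℕ) : ℝ) = (c:ℝ) - 1 := by
        have hc1 : 1 ≤ c := by omega
        push_cast [Nat.cast_sub hc1]
        ring
      rw [h2] at h1
      have h3 : (c:ℝ) ≥ 2 := by exact_mod_cast hc2
      linarith
    calc (t:ℝ) ≤ (k:ℝ) := by exact_mod_cast htk
      _ = 40 * ((Nat.clog 2 n : ℕ) : ℝ) := by rw [hkdef]; push_cast; ring
      _ ≤ 40 * (2 * Real.logb 2 n) := by nlinarith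
      _ = 80 * Real.logb 2 n := by ring
end

section
/- Let I be an independent set in J_±(n,3,-2), and consider the vertices of I whose signs alternate with respect to the coordinate order (i.e., of the form a⁺b⁻c⁺ or a⁻b⁺c⁻ with a < b < c). Then the set of pairs {{a,b}, {b,c}} of consecutive coordinate pairs arising from the supports of these vertices forms a bipartite subgraph of the shift graph H on pairs of [n]. -/
open SimpleGraph Finset

/-- Negation of a vertex. -/
def negJ {n k : ℕ} (v : JVert n k) : JVert n k :=
  ⟨fun i => -v.1 i, by
    constructor
    · intro i; rcases v.2.1 i with h | h | h <;> simp [h]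
    · have h : (Finset.univ.filter fun i => -v.1 i ≠ 0)
          = Finset.univ.filter fun i => v.1 i ≠ 0 := by
        apply Finset.filter_congr
        intro i _
        simp
      rw [h, v.2.2]⟩

lemma negJ_val {n k : ℕ} (v : JVert n k) (i : Fin n) : (negJ v).1 i = -v.1 i := rfl

lemma JVert.ext' {n k : ℕ} {v w : JVert n k} (h : ∀ i, v.1 i = w.1 i) : v = w :=
  Subtype.ext (funext h)

/-- A vertex of `JVert n 3` with three distinct nonzero coordinates vanishes
elsewhere. -/
lemma supp_zero {n : ℕ} (v : JVert n 3) {a b c : Fin n}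
    (hab : a ≠ b) (hac : a ≠ c) (hbc : b ≠ c)
    (ha : v.1 a ≠ 0) (hb : v.1 b ≠ 0) (hc : v.1 c ≠ 0) :
    ∀ i, i ≠ a → i ≠ b → i ≠ c → v.1 i = 0 := by
  classical
  intro i hia hib hic
  by_contra h
  have hsub : ({a, b, c, i} : Finset (Fin n)) ⊆
      Finset.univ.filter (fun j => v.1 j ≠ 0) := by
    intro j hj
    simp only [Finset.mem_insert, Finset.mem_singleton] at hj
    rcases hj with rfl | rfl | rfl | rfl <;> simp [ha, hb, hc, h]
  have hcard : ({a, b, c, i} : Finset (Fin n)).card = 4 := by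
    rw [Finset.card_insert_of_notMem (by simp [hab, hac, Ne.symm hia]),
      Finset.card_insert_of_notMem (by simp [hbc, Ne.symm hib]),
      Finset.card_insert_of_notMem (by simp [Ne.symm hic]),
      Finset.card_singleton]
  have hle := Finset.card_le_card hsub
  rw [v.2.2, hcard] at hle
  omega

/-- Scalar product of two vertices, computed on the support of the first. -/
lemma sum_eq_three {n : ℕ} (v w : JVert n 3) {a b c : Fin n}
    (hab : a ≠ b) (hac : a ≠ c) (hbc : b ≠ c)
    (hv : ∀ i, i ≠ a → i ≠ b → i ≠ c → v.1 i = 0) :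
    ∑ i, v.1 i * w.1 i = v.1 a * w.1 a + v.1 b * w.1 b + v.1 c * w.1 c := by
  classical
  rw [← Finset.sum_subset (Finset.subset_univ ({a, b, c} : Finset (Fin n)))
      (fun i _ hi => by
        simp only [Finset.mem_insert, Finset.mem_singleton, not_or] at hi
        rw [hv i hi.1 hi.2.1 hi.2.2, zero_mul])]
  rw [Finset.sum_insert (by simp [hab, hac]),
    Finset.sum_insert (by simp [hbc]), Finset.sum_singleton]
  ring

/-- The coloring predicate: a pair is colored `true` iff some vertex of `I`
has pattern `+-+` with that pair as its lower pair, or pattern `-+-` with that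
pair as its upper pair and its negation not in `I`. -/
def Cond (n : ℕ) (I : Set (JVert n 3)) (p : {q : Fin n × Fin n // q.1 < q.2}) : Prop :=
  (∃ v ∈ I, ∃ d : Fin n, p.1.2 < d ∧ v.1 p.1.1 = 1 ∧ v.1 p.1.2 = -1 ∧ v.1 d = 1) ∨
  (∃ v ∈ I, ∃ z : Fin n, z < p.1.1 ∧ v.1 z = -1 ∧ v.1 p.1.1 = 1 ∧ v.1 p.1.2 = -1 ∧
    negJ v ∉ I)

lemma pos_case {n : ℕ} (I : Set (JVert n 3))
    (hI : ∀ u ∈ I, ∀ v ∈ I, ¬ (Jpm n 3 (-2)).Adj u v)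
    {v : JVert n 3} (hv : v ∈ I) {a b c : Fin n} (hab : a < b) (hbc : b < c)
    (ha : v.1 a = 1) (hb : v.1 b = -1) (hc : v.1 c = 1) :
    Cond n I ⟨(a, b), hab⟩ ∧ ¬ Cond n I ⟨(b, c), hbc⟩ := by
  have hab' : a ≠ b := hab.ne
  have hac' : a ≠ c := (hab.trans hbc).ne
  have hbc' : b ≠ c := hbc.ne
  have hvz : ∀ i, i ≠ a → i ≠ b → i ≠ c → v.1 i = 0 :=
    supp_zero v hab' hac' hbc' (by rw [ha]; norm_num) (by rw [hb]; norm_num)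
      (by rw [hc]; norm_num)
  constructor
  · exact Or.inl ⟨v, hv, c, hbc, ha, hb, hc⟩
  · rintro (⟨w, hw, d, hcd, hwb, hwc, hwd⟩ | ⟨w, hw, z, hzb, hwz, hwb, hwc, hnw⟩)
    · -- w has pattern +-+ on b < c < d : scalar product with v is -2
      have hbd : b ≠ d := (hbc.trans hcd).ne
      have had : a ≠ d := ((hab.trans hbc).trans hcd).ne
      have hwz' : ∀ i, i ≠ b → i ≠ c → i ≠ d → w.1 i = 0 :=
        supp_zero w hbc' hbd hcd.ne (by rw [hwb]; norm_num) (by rw [hwc]; norm_num)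
          (by rw [hwd]; norm_num)
      have hwa : w.1 a = 0 := hwz' a hab' hac' had
      have hsum : ∑ i, v.1 i * w.1 i = -2 := by
        rw [sum_eq_three v w hab' hac' hbc' hvz, ha, hb, hc, hwa, hwb, hwc]; ring
      have hne : v ≠ w := fun h => by rw [h, hwb] at hb; norm_num at hb
      exact hI v hv w hw ⟨hne, hsum⟩
    · -- w has pattern -+- on z < b < c with negJ w ∉ I
      by_cases hza : z = a
      · -- then w = -v, so v = negJ w ∈ I, contradiction with negJ w ∉ I
        subst hza
        have : v = negJ w := by
          apply JVert.ext'
          intro i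
          rw [negJ_val]
          by_cases h1 : i = z
          · subst h1; simp [ha, hwz]
          by_cases h2 : i = b
          · subst h2; simp [hb, hwb]
          by_cases h3 : i = c
          · subst h3; simp [hc, hwc]
          · have hwz' : ∀ j, j ≠ z → j ≠ b → j ≠ c → w.1 j = 0 :=
              supp_zero w hab' hac' hbc' (by rw [hwz]; norm_num)
                (by rw [hwb]; norm_num) (by rw [hwc]; norm_num)
            simp [hvz i h1 h2 h3, hwz' i h1 h2 h3]
        exact hnw (this ▸ hv)
      · have hzb' : z ≠ b := hzb.ne
        have hzc : z ≠ c := (hzb.trans hbc).ne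
        have hwz' : ∀ i, i ≠ z → i ≠ b → i ≠ c → w.1 i = 0 :=
          supp_zero w hzb' hzc hbc' (by rw [hwz]; norm_num) (by rw [hwb]; norm_num)
            (by rw [hwc]; norm_num)
        have hwa : w.1 a = 0 := hwz' a (fun h => hza h.symm) hab' hac'
        have hsum : ∑ i, v.1 i * w.1 i = -2 := by
          rw [sum_eq_three v w hab' hac' hbc' hvz, ha, hb, hc, hwa, hwb, hwc]; ring
        have hne : v ≠ w := fun h => by rw [h, hwb] at hb; norm_num at hb
        exact hI v hv w hw ⟨hne, hsum⟩

lemma neg_case {n : ℕ} (I : Set (JVert n 3))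
    (hI : ∀ u ∈ I, ∀ v ∈ I, ¬ (Jpm n 3 (-2)).Adj u v)
    {v : JVert n 3} (hv : v ∈ I) (hnv : negJ v ∉ I)
    {a b c : Fin n} (hab : a < b) (hbc : b < c)
    (ha : v.1 a = -1) (hb : v.1 b = 1) (hc : v.1 c = -1) :
    Cond n I ⟨(b, c), hbc⟩ ∧ ¬ Cond n I ⟨(a, b), hab⟩ := by
  have hab' : a ≠ b := hab.ne
  have hac' : a ≠ c := (hab.trans hbc).ne
  have hbc' : b ≠ c := hbc.ne
  have hvz : ∀ i, i ≠ a → i ≠ b → i ≠ c → v.1 i = 0 :=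
    supp_zero v hab' hac' hbc' (by rw [ha]; norm_num) (by rw [hb]; norm_num)
      (by rw [hc]; norm_num)
  constructor
  · exact Or.inr ⟨v, hv, a, hab, ha, hb, hc, hnv⟩
  · rintro (⟨w, hw, d, hbd, hwa, hwb, hwd⟩ | ⟨w, hw, z, hza, hwz, hwa, hwb, hnw⟩)
    · -- w has pattern +-+ on a < b < d
      by_cases hdc : d = c
      · -- then w = negJ v ∈ I, contradiction
        subst hdc
        have hwzz : ∀ j, j ≠ a → j ≠ b → j ≠ d → w.1 j = 0 :=
          supp_zero w hab' hac' hbc' (by rw [hwa]; norm_num) (by rw [hwb]; norm_num)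
            (by rw [hwd]; norm_num)
        have : w = negJ v := by
          apply JVert.ext'
          intro i
          rw [negJ_val]
          by_cases h1 : i = a
          · subst h1; simp [ha, hwa]
          by_cases h2 : i = b
          · subst h2; simp [hb, hwb]
          by_cases h3 : i = d
          · subst h3; simp [hc, hwd]
          · simp [hvz i h1 h2 h3, hwzz i h1 h2 h3]
        exact hnv (this ▸ hw)
      · have had : a ≠ d := (hab.trans hbd).ne
        have hbd' : b ≠ d := hbd.ne
        have hwzz : ∀ i, i ≠ a → i ≠ b → i ≠ d → w.1 i = 0 :=
          supp_zero w hab' had hbd' (by rw [hwa]; norm_num) (by rw [hwb]; norm_num)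
            (by rw [hwd]; norm_num)
        have hwc : w.1 c = 0 := hwzz c (Ne.symm hac') (Ne.symm hbc') (fun h => hdc h.symm)
        have hsum : ∑ i, v.1 i * w.1 i = -2 := by
          rw [sum_eq_three v w hab' hac' hbc' hvz, ha, hb, hc, hwa, hwb, hwc]; ring
        have hne : v ≠ w := fun h => by rw [h, hwa] at ha; norm_num at ha
        exact hI v hv w hw ⟨hne, hsum⟩
    · -- w has pattern -+- on z < a < b
      have hzb : z ≠ b := (hza.trans hab).ne
      have hzc : z ≠ c := ((hza.trans hab).trans hbc).ne
      have hwzz : ∀ i, i ≠ z → i ≠ a → i ≠ b → w.1 i = 0 :=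
        supp_zero w hza.ne (hza.trans hab).ne hab' (by rw [hwz]; norm_num)
          (by rw [hwa]; norm_num) (by rw [hwb]; norm_num)
      have hwc : w.1 c = 0 := hwzz c (Ne.symm hzc) (Ne.symm hac') (Ne.symm hbc')
      have hsum : ∑ i, v.1 i * w.1 i = -2 := by
        rw [sum_eq_three v w hab' hac' hbc' hvz, ha, hb, hc, hwa, hwb, hwc]; ring
      have hne : v ≠ w := fun h => by rw [h, hwa] at ha; norm_num at ha
      exact hI v hv w hw ⟨hne, hsum⟩

/-- The edges of the shift graph arising from alternating-sign vertices of an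
independent set in `J_±(n,3,-2)` form a bipartite subgraph: there is a
two-coloring of the pairs separating every such edge. -/
theorem alternating_edges_bipartite (n : ℕ) (I : Set (JVert n 3))
    (hI : ∀ u ∈ I, ∀ v ∈ I, ¬ (Jpm n 3 (-2)).Adj u v) :
    ∃ f : {p : Fin n × Fin n // p.1 < p.2} → Bool,
      ∀ v ∈ I, ∀ (a b c : Fin n) (hab : a < b) (hbc : b < c),
        ((v.1 a = 1 ∧ v.1 b = -1 ∧ v.1 c = 1) ∨
         (v.1 a = -1 ∧ v.1 b = 1 ∧ v.1 c = -1)) →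
        f ⟨(a, b), hab⟩ ≠ f ⟨(b, c), hbc⟩ := by
  classical
  refine ⟨fun p => if Cond n I p then true else false, ?_⟩
  intro v hv a b c hab hbc hpat
  rcases hpat with ⟨ha, hb, hc⟩ | ⟨ha, hb, hc⟩
  · obtain ⟨h1, h2⟩ := pos_case I hI hv hab hbc ha hb hc
    simp [h1, h2]
  · by_cases hnv : negJ v ∈ I
    · obtain ⟨h1, h2⟩ := pos_case I hI hnv hab hbc
        (by simp [negJ_val, ha]) (by simp [negJ_val, hb])
        (by simp [negJ_val, hc])
      simp [h1, h2]
    · obtain ⟨h1, h2⟩ := neg_case I hI hv hnv hab hbc ha hb hc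
      simp [h1, h2]
end

section
/- For all n ≥ 3, χ(J_±(n,3,-2)) ≥ ⌈log₂⌈log₂ n⌉⌉. -/
open SimpleGraph Finset

namespace JpmAux

variable {n : ℕ}

/-- The vector `e_i - e_j + e_k`. -/
def vtx (i j k : Fin n) : Fin n → ℤ :=
  fun l => if l = i then 1 else if l = j then -1 else if l = k then 1 else 0

lemma vtx_range (i j k : Fin n) :
    ∀ l, vtx i j k l = -1 ∨ vtx i j k l = 0 ∨ vtx i j k l = 1 := by
  intro l; unfold vtx; split_ifs <;> simp

lemma vtx_support (i j k : Fin n) (hij : i < j) (hjk : j < k) :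
    (Finset.univ.filter (fun l => vtx i j k l ≠ 0)) = {i, j, k} := by
  ext l
  simp only [mem_filter, mem_univ, true_and, mem_insert, mem_singleton, vtx]
  show l ∈ Finset.univ.filter (fun l => vtx i j k l ≠ 0) ↔ l = i ∨ l = j ∨ l = k
  rw [Finset.mem_filter]
  simp only [mem_univ, true_and, vtx]
  by_cases h1 : l = i <;> by_cases h2 : l = j <;> by_cases h3 : l = k <;> simp_all

/-- The vertex `e_i - e_j + e_k` for `i < j < k`. -/
def V (i j k : Fin n) (hij : i < j) (hjk : j < k) : JVert n 3 :=
  ⟨vtx i j k, vtx_range i j k, by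
    rw [vtx_support i j k hij hjk]
    rw [Finset.card_insert_of_notMem (by simp [hij.ne, (hij.trans hjk).ne]),
      Finset.card_insert_of_notMem (by simp [hjk.ne]), Finset.card_singleton]⟩

lemma adj_V (i j k l : Fin n) (hij : i < j) (hjk : j < k) (hkl : k < l) :
    (Jpm n 3 (-2)).Adj (V i j k hij hjk) (V j k l hjk hkl) := by
  have hik : i ≠ k := (hij.trans hjk).ne
  have hil : i ≠ l := (hij.trans (hjk.trans hkl)).ne
  have hjl : j ≠ l := (hjk.trans hkl).ne
  constructor
  · intro h
    have h2 := congrArg (fun w : JVert n 3 => w.1 i) h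
    simp only [V, vtx] at h2
    simp [hij.ne, hik, hil] at h2
  · have key : ∀ x : Fin n, (V i j k hij hjk).1 x * (V j k l hjk hkl).1 x =
        (if x = j then (-1:ℤ) else 0) + (if x = k then -1 else 0) := by
      intro x
      simp only [V, vtx]
      by_cases h1 : x = i
      · subst h1; simp [hij.ne, hik, hil]
      · by_cases h2 : x = j
        · subst h2; simp [hij.ne', hjk.ne]
        · by_cases h3 : x = k
          · subst h3; simp [hjk.ne', hik.symm, hkl.ne]
          · by_cases h4 : x = l
            · subst h4; simp [h1, h2, h3]
            · simp [h1, h2, h3, h4]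
    calc ∑ x, (V i j k hij hjk).1 x * (V j k l hjk hkl).1 x
        = ∑ x : Fin n, ((if x = j then (-1:ℤ) else 0) + (if x = k then -1 else 0)) :=
          Finset.sum_congr rfl (fun x _ => key x)
      _ = -2 := by rw [Finset.sum_add_distrib]; simp

variable {m : ℕ} (C : (Jpm n 3 (-2)).Coloring (Fin m))

/-- The set of colors of vertices `e_i - e_j + e_k` for `i < j`. -/
def Sset (j k : Fin n) : Finset (Fin m) :=
  if hjk : j < k then
    (univ.filter (fun i => i < j)).attach.image
      (fun i => C (V i.1 j k (by have := i.2; simp only [mem_filter] at this; exact this.2) hjk))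
  else ∅

lemma mem_Sset_of (i j k : Fin n) (hij : i < j) (hjk : j < k) :
    C (V i j k hij hjk) ∈ Sset C j k := by
  rw [Sset, dif_pos hjk]
  exact Finset.mem_image.mpr ⟨⟨i, by simp [hij]⟩, Finset.mem_attach _ _, rfl⟩

lemma exists_of_mem_Sset {c : Fin m} {j k : Fin n} (hjk : j < k) (hc : c ∈ Sset C j k) :
    ∃ (i : Fin n) (hij : i < j), c = C (V i j k hij hjk) := by
  rw [Sset, dif_pos hjk] at hc
  obtain ⟨⟨i, hi⟩, -, hci⟩ := Finset.mem_image.mp hc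
  simp only [mem_filter] at hi
  exact ⟨i, hi.2, hci.symm⟩

lemma Sset_ne (j k l : Fin n) (hjk : j < k) (hkl : k < l) :
    Sset C j k ≠ Sset C k l := by
  intro h
  have hmem : C (V j k l hjk hkl) ∈ Sset C j k :=
    h ▸ mem_Sset_of C j k l hjk hkl
  obtain ⟨i, hij, hc⟩ := exists_of_mem_Sset C hjk hmem
  exact C.valid (adj_V i j k l hij hjk hkl) hc.symm

/-- The set of the sets `Sset j k` for `j < k`. -/
def Tset (k : Fin n) : Finset (Finset (Fin m)) :=
  (univ.filter (fun j => j < k)).image (fun j => Sset C j k)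

lemma Tset_ne (k l : Fin n) (hkl : k < l) : Tset C k ≠ Tset C l := by
  intro h
  have hmem : Sset C k l ∈ Tset C k := by
    rw [h, Tset]
    exact Finset.mem_image.mpr ⟨k, by simp [hkl], rfl⟩
  obtain ⟨j, hj, hS⟩ := Finset.mem_image.mp hmem
  simp only [mem_filter] at hj
  exact Sset_ne C j k l hj.2 hkl hS

lemma Tset_injective : Function.Injective (Tset C) := by
  intro k l h
  rcases lt_trichotomy k l with hlt | heq | hgt
  · exact absurd h (Tset_ne C k l hlt)
  · exact heq
  · exact absurd h.symm (Tset_ne C l k hgt)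

lemma card_le (C : (Jpm n 3 (-2)).Coloring (Fin m)) : n ≤ 2 ^ (2 ^ m) := by
  have h := Fintype.card_le_of_injective (Tset C) (Tset_injective C)
  simpa [Fintype.card_finset] using h

end JpmAux

/-- `χ(J_±(n,3,-2)) ≥ ⌈log₂⌈log₂ n⌉⌉` for `n ≥ 3`. -/
theorem Jpm_three_neg_two_lower (n : ℕ) (hn : 3 ≤ n) :
    (Nat.clog 2 (Nat.clog 2 n) : ℕ∞) ≤ (Jpm n 3 (-2)).chromaticNumber := by
  rw [SimpleGraph.chromaticNumber]
  refine le_iInf₂ fun m hm => ?_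
  obtain ⟨C⟩ := hm
  have h1 : n ≤ 2 ^ (2 ^ m) := JpmAux.card_le C
  have h2 : Nat.clog 2 n ≤ 2 ^ m := (Nat.clog_le_iff_le_pow one_lt_two).mpr h1
  have h3 : Nat.clog 2 (Nat.clog 2 n) ≤ m := (Nat.clog_le_iff_le_pow one_lt_two).mpr h2
  exact_mod_cast h3
end

section
/- Let n > 3 and let Ω be the set of 3-element subsets of {1,...,n}. Let m be the minimal number of colors needed to color Ω so that whenever 1 ≤ a < b < c < d ≤ n, the triples {a,b,c} and {b,c,d} receive different colors. Then (1/100)·log log n ≤ m ≤ 100·log log n. -/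
lemma msb_bits {x y : ℕ} (h : x < y) :
    x.testBit ((x ^^^ y).log2) = false ∧ y.testBit ((x ^^^ y).log2) = true := by
  have hxy : x ^^^ y ≠ 0 := by
    simp only [ne_eq, xor_eq_zero_iff]; omega
  set i := (x ^^^ y).log2 with hi
  have hdi : (x ^^^ y).testBit i = true := by
    rw [Nat.testBit_eq_decide_div_mod_eq]
    have h1 : 2 ^ i ≤ x ^^^ y := Nat.log2_self_le hxy
    have h2 : x ^^^ y < 2 ^ (i + 1) := Nat.lt_log2_self
    have : (x ^^^ y) / 2 ^ i = 1 := by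
      apply Nat.div_eq_of_lt_le
      · simpa using h1
      · rw [pow_succ] at h2; omega
    simp [this]
  have hj : ∀ j, i < j → x.testBit j = y.testBit j := by
    intro j hjj
    have hlt : x ^^^ y < 2 ^ j := (Nat.log2_lt hxy).mp hjj
    have := Nat.testBit_lt_two_pow hlt
    rw [Nat.testBit_xor] at this
    revert this
    cases x.testBit j <;> cases y.testBit j <;> simp
  have hne : x.testBit i ≠ y.testBit i := by
    rw [Nat.testBit_xor] at hdi
    revert hdi
    cases x.testBit i <;> cases y.testBit i <;> simp
  cases hx : x.testBit i with
  | false =>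
    refine ⟨rfl, ?_⟩
    cases hy : y.testBit i with
    | false => rw [hx, hy] at hne; exact absurd rfl hne
    | true => rfl
  | true =>
    exfalso
    have hy : y.testBit i = false := by
      cases hy : y.testBit i
      · rfl
      · rw [hx, hy] at hne; exact absurd rfl hne
    have : y < x := Nat.lt_of_testBit i hy hx (fun j hjj => (hj j hjj).symm)
    omega

/-- First-level shift coloring: position of most significant differing bit. -/
def gpc (a b : ℕ) : ℕ := (a ^^^ b).log2

lemma gpc_lt {n a b : ℕ} (ha : a < n) (hb : b < n) (hab : a ≠ b) :
    gpc a b < n.log2 + 1 := by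
  have hn0 : n ≠ 0 := by omega
  have h2 : n < 2 ^ (n.log2 + 1) := Nat.lt_log2_self
  have hx : a ^^^ b < 2 ^ (n.log2 + 1) :=
    Nat.xor_lt_two_pow (by omega) (by omega)
  have hne : a ^^^ b ≠ 0 := by simp only [ne_eq, xor_eq_zero_iff]; exact hab
  exact (Nat.log2_lt hne).mpr hx

lemma gpc_ne {a b c : ℕ} (h1 : a < b) (h2 : b < c) : gpc a b ≠ gpc b c := by
  intro h
  have e1 := (msb_bits h1).2
  have e2 := (msb_bits h2).1
  unfold gpc at h
  rw [h] at e1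
  rw [e1] at e2
  exact Bool.noConfusion e2

/-- Second-level coloring of triples. -/
def colr (a b c : ℕ) : ℕ :=
  2 * (gpc a b ^^^ gpc b c).log2 + (if gpc a b < gpc b c then 1 else 0)

lemma colr_lt {n a b c : ℕ} (h1 : a < b) (h2 : b < c) (h3 : c < n) :
    colr a b c < 2 * (Nat.log2 (n.log2 + 1) + 1) := by
  set K : ℕ := n.log2 + 1 with hK
  have hX : gpc a b < K := gpc_lt (by omega) (by omega) (by omega)
  have hY : gpc b c < K := gpc_lt (by omega) (by omega) (by omega)
  have hXY : gpc a b ≠ gpc b c := gpc_ne h1 h2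
  have hKK : K < 2 ^ (K.log2 + 1) := Nat.lt_log2_self
  have hx : gpc a b ^^^ gpc b c < 2 ^ (K.log2 + 1) :=
    Nat.xor_lt_two_pow (by omega) (by omega)
  have hne : gpc a b ^^^ gpc b c ≠ 0 := by
    simp only [ne_eq, xor_eq_zero_iff]; exact hXY
  have hi : (gpc a b ^^^ gpc b c).log2 < K.log2 + 1 := (Nat.log2_lt hne).mpr hx
  unfold colr
  split <;> omega

lemma colr_ne {a b c d : ℕ} (h1 : a < b) (h2 : b < c) (h3 : c < d) :
    colr a b c ≠ colr b c d := by
  intro h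
  have hXY : gpc a b ≠ gpc b c := gpc_ne h1 h2
  have hYZ : gpc b c ≠ gpc c d := gpc_ne h2 h3
  unfold colr at h
  by_cases hxy : gpc a b < gpc b c <;> by_cases hyz : gpc b c < gpc c d <;>
      simp only [hxy, hyz, if_true, if_false, if_pos, if_neg, not_false_iff] at h
  · -- both flags 1 : positions equal
    have hieq : (gpc a b ^^^ gpc b c).log2 = (gpc b c ^^^ gpc c d).log2 := by omega
    have e1 := (msb_bits hxy).2
    have e2 := (msb_bits hyz).1
    rw [hieq] at e1
    rw [e1] at e2
    exact Bool.noConfusion e2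
  · omega
  · omega
  · have hyx : gpc b c < gpc a b := by omega
    have hzy : gpc c d < gpc b c := by omega
    have hieq : (gpc a b ^^^ gpc b c).log2 = (gpc b c ^^^ gpc c d).log2 := by omega
    have e1 := (msb_bits hyx).1
    have e2 := (msb_bits hzy).2
    rw [Nat.xor_comm] at e1 e2
    rw [hieq] at e1
    rw [e1] at e2
    exact Bool.noConfusion e2

lemma lower_card {n m : ℕ}
    (f : {t : Fin n × Fin n × Fin n // t.1 < t.2.1 ∧ t.2.1 < t.2.2} → Fin m)
    (hf : ∀ (a b c d : Fin n) (hab : a < b) (hbc : b < c) (hcd : c < d),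
      f ⟨(a, b, c), hab, hbc⟩ ≠ f ⟨(b, c, d), hbc, hcd⟩) :
    n ≤ 2 ^ 2 ^ m := by
  classical
  set g : Fin n → Fin n → (Fin m → Bool) := fun a b c =>
    decide (∃ x, ∃ h1 : x < a, ∃ h2 : a < b, f ⟨(x, a, b), h1, h2⟩ = c) with hgdef
  have hg : ∀ a b c : Fin n, a < b → b < c → g a b ≠ g b c := by
    intro a b c hab hbc h
    have hmem : g b c (f ⟨(a, b, c), hab, hbc⟩) = true := by
      rw [hgdef]
      simp only [decide_eq_true_eq]
      exact ⟨a, hab, hbc, rfl⟩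
    rw [← h, hgdef] at hmem
    simp only [decide_eq_true_eq] at hmem
    obtain ⟨x, h1, h2, hfx⟩ := hmem
    exact hf x a b c h1 h2 hbc hfx
  set T : Fin n → ((Fin m → Bool) → Bool) := fun b s =>
    decide (∃ a, ∃ _ : a < b, s = g a b) with hTdef
  have key : ∀ a b : Fin n, a < b → T a ≠ T b := by
    intro a b hab h
    have hb : T b (g a b) = true := by
      rw [hTdef]; simp only [decide_eq_true_eq]; exact ⟨a, hab, rfl⟩
    rw [← h, hTdef] at hb
    simp only [decide_eq_true_eq] at hb
    obtain ⟨x, h1, h2⟩ := hb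
    exact hg x a b h1 hab h2.symm
  have hT : Function.Injective T := by
    intro a b h
    by_contra hne
    rcases lt_or_gt_of_ne hne with h' | h'
    · exact key a b h' h
    · exact key b a h' h.symm
  have := Fintype.card_le_of_injective T hT
  simpa [Fintype.card_fun] using this



/-- IMC 2022 Problem 4: the chromatic number `m` of the double shift graph on
triples from `{1,…,n}` satisfies `(1/100)·log log n ≤ m ≤ 100·log log n`. -/
theorem double_shift_chromatic (n : ℕ) (hn : 3 < n) (m : ℕ)
    (hm : IsLeast {q : ℕ |
      ∃ f : {t : Fin n × Fin n × Fin n // t.1 < t.2.1 ∧ t.2.1 < t.2.2} → Fin q,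
        ∀ (a b c d : Fin n) (hab : a < b) (hbc : b < c) (hcd : c < d),
          f ⟨(a, b, c), hab, hbc⟩ ≠ f ⟨(b, c, d), hbc, hcd⟩} m) :
    (1 / 100 : ℝ) * Real.logb 2 (Real.logb 2 n) ≤ (m : ℝ) ∧
    (m : ℝ) ≤ 100 * Real.logb 2 (Real.logb 2 n) := by
  have h1 : (1 : ℝ) < 2 := one_lt_two
  have hn4 : (4 : ℝ) ≤ (n : ℝ) := by exact_mod_cast (by omega : 4 ≤ n)
  set L : ℝ := Real.logb 2 n with hLdef
  set LL : ℝ := Real.logb 2 L with hLLdef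
  have hL2 : (2 : ℝ) ≤ L := by
    have h4 : Real.logb 2 4 ≤ L := Real.logb_le_logb_of_le h1 (by norm_num) hn4
    have : Real.logb 2 (4 : ℝ) = 2 := by
      rw [show (4 : ℝ) = 2 ^ (2 : ℕ) by norm_num, Real.logb_pow,
        Real.logb_self_eq_one h1]
      norm_num
    linarith
  have hLL1 : (1 : ℝ) ≤ LL := by
    have : Real.logb 2 (2 : ℝ) ≤ LL :=
      Real.logb_le_logb_of_le h1 (by norm_num) hL2
    rwa [Real.logb_self_eq_one h1] at this
  constructor
  · -- lower bound
    obtain ⟨f, hf⟩ := hm.1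
    have hcard : n ≤ 2 ^ 2 ^ m := lower_card f hf
    have hLle : L ≤ (2 : ℝ) ^ (m : ℕ) := by
      have hc : (n : ℝ) ≤ (2 : ℝ) ^ ((2 ^ m : ℕ)) := by exact_mod_cast hcard
      have := Real.logb_le_logb_of_le h1 (by linarith : (0:ℝ) < (n:ℝ)) hc
      rw [Real.logb_pow, Real.logb_self_eq_one h1, mul_one] at this
      rw [hLdef]
      calc Real.logb 2 n ≤ ((2 ^ m : ℕ) : ℝ) := this
        _ = (2 : ℝ) ^ (m : ℕ) := by push_cast; ring
    have hm' : LL ≤ (m : ℝ) := by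
      have := Real.logb_le_logb_of_le h1 (by linarith : (0:ℝ) < L) hLle
      rwa [Real.logb_pow, Real.logb_self_eq_one h1, mul_one] at this
    nlinarith
  · -- upper bound
    set q := 2 * (Nat.log2 (n.log2 + 1) + 1) with hq
    have hmem : q ∈ {q : ℕ |
        ∃ f : {t : Fin n × Fin n × Fin n // t.1 < t.2.1 ∧ t.2.1 < t.2.2} → Fin q,
          ∀ (a b c d : Fin n) (hab : a < b) (hbc : b < c) (hcd : c < d),
            f ⟨(a, b, c), hab, hbc⟩ ≠ f ⟨(b, c, d), hbc, hcd⟩} := by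
      refine ⟨fun t => ⟨colr (t.1.1 : ℕ) (t.1.2.1 : ℕ) (t.1.2.2 : ℕ),
        colr_lt t.2.1 t.2.2 t.1.2.2.isLt⟩, ?_⟩
      intro a b c d hab hbc hcd h
      exact colr_ne hab hbc hcd (congrArg Fin.val h)
    have hmq : m ≤ q := hm.2 hmem
    have hA : ((n.log2 : ℝ)) ≤ L := by
      have h2 : (2:ℕ) ^ n.log2 ≤ n := Nat.log2_self_le (by omega)
      have hc : ((2:ℝ)) ^ n.log2 ≤ (n : ℝ) := by exact_mod_cast h2
      have := Real.logb_le_logb_of_le h1 (by positivity) hc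
      rwa [Real.logb_pow, Real.logb_self_eq_one h1, mul_one] at this
    have hB : ((Nat.log2 (n.log2 + 1) : ℝ)) ≤ 1 + LL := by
      have h2 : (2:ℕ) ^ (Nat.log2 (n.log2 + 1)) ≤ n.log2 + 1 :=
        Nat.log2_self_le (by omega)
      have hc : ((2:ℝ)) ^ (Nat.log2 (n.log2 + 1)) ≤ ((n.log2 : ℝ) + 1) := by
        exact_mod_cast h2
      have hle : ((n.log2 : ℝ) + 1) ≤ 2 * L := by linarith
      have := Real.logb_le_logb_of_le h1 (by positivity) (hc.trans hle)
      rw [Real.logb_pow, Real.logb_self_eq_one h1, mul_one,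
        Real.logb_mul two_ne_zero (by linarith), Real.logb_self_eq_one h1] at this
      rw [hLLdef]
      linarith
    have hqr : (q : ℝ) ≤ 100 * LL := by
      have hqe : (q : ℝ) = 2 * ((Nat.log2 (n.log2 + 1) : ℝ) + 1) := by
        rw [hq]; push_cast; ring
      rw [hqe]; nlinarith
    calc (m : ℝ) ≤ (q : ℝ) := by exact_mod_cast hmq
      _ ≤ 100 * LL := hqr
end
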